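/- arXiv:1811.10255 — 3 statements merged into one kernel-verified Lean document; each statement's English description precedes it below -/
import Mathlib

section
/- Let $1/2 < \delta \le 1$, $x \in \mathbb{C}$ with $a_x := \mathcal{R}e(x) > 0$, $\beta > 1$, $e > 0$, and $F^{\delta}_{k+1,n}(x) := \prod_{m=k+1}^n (1 - x m^{-\delta})$ (for $m_0 \le k \le n$, with $m_0$ large enough). Then $\sum_{k=m_0}^{n} k^{-\beta} |F^{\delta}_{k+1,n}(x)|^{e}$ is: $O(n^{-(\beta-\delta)})$ if $1/2 < \delta < 1$; $O(n^{-e a_x})$ if $\delta = 1$ and $e a_x < \beta - 1$; $O(n^{-(\beta-1)} \ln n)$ if $\delta = 1$ and $e a_x = \beta - 1$; and $O(n^{-(\beta-1)})$ if $\delta = 1$ and $e a_x > \beta - 1$. -/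
open Finset Filter Asymptotics

/-- telescoping sum over `Icc a n`. -/
lemma s9_tele (f : ℕ → ℝ) (a n : ℕ) (h : a ≤ n + 1) :
    ∑ m ∈ Icc a n, (f (m + 1) - f m) = f (n + 1) - f a := by
  rw [← Finset.Ico_add_one_right_eq_Icc, Finset.sum_Ico_eq_sum_range]
  have h2 := Finset.sum_range_sub (fun i => f (a + i)) (n + 1 - a)
  rw [Nat.add_sub_cancel' h] at h2
  simpa [add_assoc] using h2

lemma s9_sum_le_tele {g f : ℕ → ℝ} {a n : ℕ} (h : a ≤ n + 1)
    (hle : ∀ m, a ≤ m → m ≤ n → g m ≤ f (m + 1) - f m) :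
    ∑ m ∈ Icc a n, g m ≤ f (n + 1) - f a := by
  rw [← s9_tele f a n h]
  exact Finset.sum_le_sum fun m hm => hle m (mem_Icc.mp hm).1 (mem_Icc.mp hm).2

lemma s9_tele_le_sum {g f : ℕ → ℝ} {a n : ℕ} (h : a ≤ n + 1)
    (hle : ∀ m, a ≤ m → m ≤ n → f (m + 1) - f m ≤ g m) :
    f (n + 1) - f a ≤ ∑ m ∈ Icc a n, g m := by
  rw [← s9_tele f a n h]
  exact Finset.sum_le_sum fun m hm => hle m (mem_Icc.mp hm).1 (mem_Icc.mp hm).2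

/-- Bernoulli consequence: `(t+1)^p - t^p ≤ p * t^(p-1)` for `1 ≤ t`, `0 ≤ p ≤ 1`. -/
lemma s9_bern1 {p : ℝ} (hp0 : 0 ≤ p) (hp1 : p ≤ 1) {t : ℝ} (ht : 1 ≤ t) :
    (t + 1) ^ p - t ^ p ≤ p * t ^ (p - 1) := by
  have ht0 : (0:ℝ) < t := lt_of_lt_of_le one_pos ht
  have h1 : t + 1 = t * (1 + 1 / t) := by field_simp
  have h2 : (1 + 1 / t) ^ p ≤ 1 + p * (1 / t) := by
    have h1t : (0:ℝ) ≤ 1 / t := by positivity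
    exact rpow_one_add_le_one_add_mul_self (by linarith) hp0 hp1
  have h3 : (t + 1) ^ p = t ^ p * (1 + 1 / t) ^ p := by
    rw [h1, Real.mul_rpow ht0.le (by positivity)]
  have h4 : t ^ (p - 1) = t ^ p / t := by
    rw [Real.rpow_sub ht0, Real.rpow_one]
  have h5 : (0:ℝ) < t ^ p := Real.rpow_pos_of_pos ht0 p
  calc (t + 1) ^ p - t ^ p ≤ t ^ p * (1 + p * (1 / t)) - t ^ p := by
        rw [h3]
        have := mul_le_mul_of_nonneg_left h2 h5.le
        linarith
    _ = p * (t ^ p / t) := by field_simp; ring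
    _ = p * t ^ (p - 1) := by rw [h4]

/-- Bernoulli consequence: `p * t^(p-1) * (t - s) ≤ t^p - s^p` for `0 < s ≤ t`, `0 < p ≤ 1`. -/
lemma s9_bern2 {p : ℝ} (hp0 : 0 < p) (hp1 : p ≤ 1) {s t : ℝ} (hs : 0 < s) (hst : s ≤ t) :
    p * t ^ (p - 1) * (t - s) ≤ t ^ p - s ^ p := by
  have ht0 : (0:ℝ) < t := lt_of_lt_of_le hs hst
  have h1 : s = t * (1 + (s / t - 1)) := by field_simp; ring
  have h2 : (1 + (s / t - 1)) ^ p ≤ 1 + p * (s / t - 1) := by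
    have hst' : (0:ℝ) ≤ s / t := by positivity
    exact rpow_one_add_le_one_add_mul_self (by linarith) hp0.le hp1
  have h3 : s ^ p = t ^ p * (1 + (s / t - 1)) ^ p := by
    have hst' : (0:ℝ) ≤ s / t := by positivity
    rw [← Real.mul_rpow ht0.le (by linarith), ← h1]
  have h5 : (0:ℝ) < t ^ p := Real.rpow_pos_of_pos ht0 p
  have h4 : t ^ (p - 1) = t ^ p / t := by
    rw [Real.rpow_sub ht0, Real.rpow_one]
  have h6 : s ^ p ≤ t ^ p + p * (t ^ p / t) * (s - t) := by
    calc s ^ p ≤ t ^ p * (1 + p * (s / t - 1)) := by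
          rw [h3]; exact mul_le_mul_of_nonneg_left h2 h5.le
      _ = t ^ p + p * (t ^ p / t) * (s - t) := by field_simp
  rw [h4]; linarith

/-- log increment bounds. -/
lemma s9_log_ub {t : ℝ} (ht : 1 ≤ t) : Real.log (t + 1) - Real.log t ≤ 1 / t := by
  have ht0 : (0:ℝ) < t := lt_of_lt_of_le one_pos ht
  have : Real.log ((t + 1) / t) ≤ (t + 1) / t - 1 :=
    Real.log_le_sub_one_of_pos (by positivity)
  rw [Real.log_div (by positivity) (ne_of_gt ht0)] at this
  have h2 : (t + 1) / t - 1 = 1 / t := by field_simp; ring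
  linarith [h2 ▸ this]

lemma s9_log_lb {t : ℝ} (ht : 1 ≤ t) : 1 / (t + 1) ≤ Real.log (t + 1) - Real.log t := by
  have ht0 : (0:ℝ) < t := lt_of_lt_of_le one_pos ht
  have : Real.log (t / (t + 1)) ≤ t / (t + 1) - 1 :=
    Real.log_le_sub_one_of_pos (by positivity)
  rw [Real.log_div (ne_of_gt ht0) (by positivity)] at this
  have h2 : t / (t + 1) - 1 = -(1 / (t + 1)) := by field_simp; ring
  linarith [h2 ▸ this]

/-- geometric-type bound. -/
lemma s9_geom {u : ℝ} (hu : 0 < u) (a n : ℕ) :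
    ∑ k ∈ Icc a n, Real.exp (-u * ((n : ℝ) - k)) ≤ Real.exp u / u := by
  have hr0 : (0:ℝ) ≤ Real.exp (-u) := (Real.exp_pos _).le
  have hr1 : Real.exp (-u) < 1 := Real.exp_lt_one_iff.mpr (by linarith)
  have step1 : ∑ k ∈ Icc a n, Real.exp (-u * ((n : ℝ) - k))
      ≤ ∑ k ∈ Icc 0 n, Real.exp (-u * ((n : ℝ) - k)) := by
    apply Finset.sum_le_sum_of_subset_of_nonneg
    · exact Finset.Icc_subset_Icc_left (Nat.zero_le a)
    · intro _ _ _; positivity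
  have step2 : ∑ k ∈ Icc 0 n, Real.exp (-u * ((n : ℝ) - k))
      = ∑ j ∈ Finset.range (n + 1), Real.exp (-u) ^ j := by
    rw [← Finset.Ico_add_one_right_eq_Icc, Nat.Ico_zero_eq_range]
    rw [← Finset.sum_range_reflect (fun j => Real.exp (-u) ^ j) (n + 1)]
    apply Finset.sum_congr rfl
    intro k hk
    have hk' : k ≤ n := Nat.lt_succ_iff.mp (Finset.mem_range.mp hk)
    rw [← Real.exp_nat_mul]
    congr 1
    rw [Nat.add_sub_cancel, Nat.cast_sub hk']
    ring
  have step3 : ∑ j ∈ Finset.range (n + 1), Real.exp (-u) ^ j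
      ≤ (1 - Real.exp (-u))⁻¹ := by
    rw [← tsum_geometric_of_lt_one hr0 hr1]
    exact (summable_geometric_of_lt_one hr0 hr1).sum_le_tsum _ (fun i _ => by positivity)
  have key : u * Real.exp (-u) ≤ 1 - Real.exp (-u) := by
    have h := Real.add_one_le_exp u
    have h2 := mul_le_mul_of_nonneg_right h (Real.exp_pos (-u)).le
    rw [← Real.exp_add] at h2
    simp only [add_neg_cancel, Real.exp_zero] at h2
    nlinarith
  have hpos : 0 < u * Real.exp (-u) := by positivity
  have step4 : (1 - Real.exp (-u))⁻¹ ≤ Real.exp u / u := by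
    have h1 : (1 - Real.exp (-u))⁻¹ ≤ (u * Real.exp (-u))⁻¹ :=
      inv_anti₀ hpos key
    have h2 : (u * Real.exp (-u))⁻¹ = Real.exp u / u := by
      rw [Real.exp_neg]; field_simp
    linarith [h2 ▸ h1]
  linarith [step1, step2 ▸ step3]

/-- `F^δ_{k+1,n}(x) = ∏_{m=k+1}^n (1 - x m^{-δ})`. -/
noncomputable def Fprod (x : ℂ) (δ : ℝ) (k n : ℕ) : ℂ :=
  ∏ m ∈ Finset.Icc (k + 1) n, (1 - x * ((((m : ℝ) ^ δ)⁻¹ : ℝ) : ℂ))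

/-- single factor bound. -/
lemma s9_factor (x : ℂ) (t : ℝ) :
    ‖1 - x * (t : ℂ)‖ ≤
      Real.exp (-x.re * t + Complex.normSq x * t ^ 2 / 2) := by
  have hsq : (‖1 - x * (t : ℂ)‖) ^ 2
      = 1 - 2 * x.re * t + Complex.normSq x * t ^ 2 := by
    rw [Complex.sq_norm]
    simp [Complex.normSq_apply, Complex.sub_re, Complex.sub_im, Complex.mul_re, Complex.mul_im]
    ring
  have h1 : (‖1 - x * (t : ℂ)‖) ^ 2
      ≤ Real.exp (-2 * x.re * t + Complex.normSq x * t ^ 2) := by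
    rw [hsq]
    have := Real.add_one_le_exp (-2 * x.re * t + Complex.normSq x * t ^ 2)
    linarith
  have h2 : Real.exp (-2 * x.re * t + Complex.normSq x * t ^ 2)
      = (Real.exp (-x.re * t + Complex.normSq x * t ^ 2 / 2)) ^ 2 := by
    rw [← Real.exp_nat_mul]
    ring_nf
  rw [h2] at h1
  have h3 : (0:ℝ) ≤ ‖1 - x * (t : ℂ)‖ := norm_nonneg _
  nlinarith [Real.exp_pos (-x.re * t + Complex.normSq x * t ^ 2 / 2)]

/-- the product bound. -/
lemma s9_Fprod_le (x : ℂ) (δ : ℝ) (k n : ℕ) :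
    ‖Fprod x δ k n‖ ≤
      Real.exp (∑ m ∈ Icc (k + 1) n,
        (-x.re * ((m : ℝ) ^ δ)⁻¹ + Complex.normSq x * (((m : ℝ) ^ δ)⁻¹) ^ 2 / 2)) := by
  rw [Fprod, norm_prod, Real.exp_sum]
  exact Finset.prod_le_prod (fun m _ => norm_nonneg _)
    (fun m _ => s9_factor x _)

/-- key uniform bound on `|Fprod|^e`. -/
lemma s9_key (x : ℂ) (δ : ℝ) (hδ₁ : 1 / 2 < δ) (e : ℝ) (he : 0 < e) :
    ∃ C3 : ℝ, 0 < C3 ∧ ∀ k n : ℕ,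
      ‖Fprod x δ k n‖ ^ e ≤
        C3 * Real.exp (-(e * x.re) * ∑ m ∈ Icc (k + 1) n, ((m : ℝ) ^ δ)⁻¹) := by
  have hδ0 : 0 < δ := by linarith
  have hsum : Summable fun m : ℕ => (((m : ℝ) ^ (2 * δ))⁻¹) :=
    Real.summable_nat_rpow_inv.mpr (by linarith)
  set C2 : ℝ := ∑' m : ℕ, ((m : ℝ) ^ (2 * δ))⁻¹ with hC2
  have hC2nn : 0 ≤ C2 := tsum_nonneg fun m => by positivity
  have hS2 : ∀ k n : ℕ, ∑ m ∈ Icc (k + 1) n, (((m : ℝ) ^ δ)⁻¹) ^ 2 ≤ C2 := by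
    intro k n
    have heq : ∀ m : ℕ, (((m : ℝ) ^ δ)⁻¹) ^ 2 = ((m : ℝ) ^ (2 * δ))⁻¹ := by
      intro m
      rw [inv_pow, ← Real.rpow_natCast (((m : ℝ) ^ δ)) 2, ← Real.rpow_mul m.cast_nonneg]
      norm_num [mul_comm]
    calc ∑ m ∈ Icc (k + 1) n, (((m : ℝ) ^ δ)⁻¹) ^ 2
        = ∑ m ∈ Icc (k + 1) n, ((m : ℝ) ^ (2 * δ))⁻¹ :=
          Finset.sum_congr rfl fun m _ => heq m
      _ ≤ C2 := hsum.sum_le_tsum _ (fun m _ => by positivity)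
  refine ⟨Real.exp (e * Complex.normSq x * C2 / 2), Real.exp_pos _, fun k n => ?_⟩
  have h1 := s9_Fprod_le x δ k n
  have h2 : ‖Fprod x δ k n‖ ^ e ≤
      (Real.exp (∑ m ∈ Icc (k + 1) n,
        (-x.re * ((m : ℝ) ^ δ)⁻¹ + Complex.normSq x * (((m : ℝ) ^ δ)⁻¹) ^ 2 / 2))) ^ e :=
    Real.rpow_le_rpow (norm_nonneg _) h1 he.le
  rw [← Real.exp_mul] at h2
  refine h2.trans ?_
  rw [← Real.exp_add]
  apply Real.exp_le_exp.mpr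
  have hsplit : (∑ m ∈ Icc (k + 1) n,
      (-x.re * ((m : ℝ) ^ δ)⁻¹ + Complex.normSq x * (((m : ℝ) ^ δ)⁻¹) ^ 2 / 2))
      = -x.re * (∑ m ∈ Icc (k + 1) n, ((m : ℝ) ^ δ)⁻¹)
        + (Complex.normSq x / 2) * ∑ m ∈ Icc (k + 1) n, (((m : ℝ) ^ δ)⁻¹) ^ 2 := by
    rw [Finset.sum_add_distrib]
    congr 1
    · rw [← Finset.mul_sum]
    · rw [Finset.mul_sum]
      exact Finset.sum_congr rfl fun m _ => by ring
  rw [hsplit]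
  have hN : 0 ≤ Complex.normSq x := Complex.normSq_nonneg x
  have hS2kn := hS2 k n
  have h4 : Complex.normSq x / 2 * (∑ m ∈ Icc (k + 1) n, (((m : ℝ) ^ δ)⁻¹) ^ 2)
      ≤ Complex.normSq x / 2 * C2 :=
    mul_le_mul_of_nonneg_left hS2kn (by positivity)
  nlinarith [mul_le_mul_of_nonneg_left h4 he.le]

/-- lower bound on `S1` for `δ < 1`. -/
lemma s9_S1_lt1 {δ : ℝ} (hδ0 : 0 < δ) (hδ : δ < 1) (k n : ℕ) (hk : 1 ≤ k) (hkn : k ≤ n) :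
    ((n : ℝ) ^ (1 - δ) - ((k : ℝ) + 1) ^ (1 - δ)) / (1 - δ)
      ≤ ∑ m ∈ Icc (k + 1) n, ((m : ℝ) ^ δ)⁻¹ := by
  have hb : 0 < 1 - δ := by linarith
  have key : ((n : ℝ) + 1) ^ (1 - δ) / (1 - δ) - ((k : ℝ) + 1) ^ (1 - δ) / (1 - δ)
      ≤ ∑ m ∈ Icc (k + 1) n, ((m : ℝ) ^ δ)⁻¹ := by
    have H := s9_tele_le_sum (g := fun m => ((m : ℝ) ^ δ)⁻¹)
      (f := fun m => ((m : ℝ)) ^ (1 - δ) / (1 - δ)) (a := k + 1) (n := n)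
      (by omega) ?_
    · simp only [Nat.cast_add, Nat.cast_one] at H
      exact H
    · intro m hm _
      simp only [Nat.cast_add, Nat.cast_one]
      have hm1 : (1 : ℝ) ≤ (m : ℝ) := by exact_mod_cast Nat.one_le_iff_ne_zero.mpr (by omega)
      have hber := s9_bern1 hb.le (by linarith) hm1
      have hrw : (m : ℝ) ^ ((1 - δ) - 1) = ((m : ℝ) ^ δ)⁻¹ := by
        have h : (1 - δ) - 1 = -δ := by ring
        rw [h, Real.rpow_neg (by positivity)]
      rw [div_sub_div_same, div_le_iff₀ hb]
      calc ((m : ℝ) + 1) ^ (1 - δ) - (m : ℝ) ^ (1 - δ)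
          ≤ (1 - δ) * (m : ℝ) ^ ((1 - δ) - 1) := hber
        _ = ((m : ℝ) ^ δ)⁻¹ * (1 - δ) := by rw [hrw]; ring
  have hmono : (n : ℝ) ^ (1 - δ) ≤ ((n : ℝ) + 1) ^ (1 - δ) :=
    Real.rpow_le_rpow n.cast_nonneg (by linarith) hb.le
  have h2 : ((n : ℝ) ^ (1 - δ) - ((k : ℝ) + 1) ^ (1 - δ)) / (1 - δ)
      ≤ ((n : ℝ) + 1) ^ (1 - δ) / (1 - δ) - ((k : ℝ) + 1) ^ (1 - δ) / (1 - δ) := by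
    rw [sub_div]
    gcongr
  exact h2.trans key

/-- lower bound on `S1` for `δ = 1`. -/
lemma s9_S1_eq1 (k n : ℕ) (hk : 1 ≤ k) (hkn : k ≤ n) :
    Real.log ((n : ℝ) + 1) - Real.log ((k : ℝ) + 1)
      ≤ ∑ m ∈ Icc (k + 1) n, ((m : ℝ) ^ (1 : ℝ))⁻¹ := by
  have H := s9_tele_le_sum (g := fun m => ((m : ℝ) ^ (1 : ℝ))⁻¹)
    (f := fun m => Real.log (m : ℝ)) (a := k + 1) (n := n)
    (by omega) ?_
  · simp only [Nat.cast_add, Nat.cast_one] at H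
    exact H
  · intro m hm _
    simp only [Nat.cast_add, Nat.cast_one]
    have hm1 : (1 : ℝ) ≤ (m : ℝ) := by exact_mod_cast Nat.one_le_iff_ne_zero.mpr (by omega)
    have h := s9_log_ub hm1
    rw [Real.rpow_one, one_div] at *
    linarith

/-- partial sums of `k^{-β}`, `β > 1`, are bounded. -/
lemma s9_psum_beta (β : ℝ) (hβ : 1 < β) :
    ∃ Cβ : ℝ, 0 ≤ Cβ ∧ ∀ s : Finset ℕ, ∑ k ∈ s, ((k : ℝ) ^ β)⁻¹ ≤ Cβ := by
  have hsum : Summable fun m : ℕ => (((m : ℝ) ^ β)⁻¹) := Real.summable_nat_rpow_inv.mpr hβ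
  exact ⟨∑' m : ℕ, ((m : ℝ) ^ β)⁻¹, tsum_nonneg fun m => by positivity,
    fun s => hsum.sum_le_tsum _ (fun m _ => by positivity)⟩

/-- harmonic partial sums. -/
lemma s9_psum_harm (a n : ℕ) (ha : 1 ≤ a) (han : a ≤ n + 1) :
    ∑ k ∈ Icc a n, ((k : ℝ))⁻¹ ≤ 2 * Real.log ((n : ℝ) + 1) := by
  have key := s9_sum_le_tele (g := fun k => ((k : ℝ))⁻¹)
    (f := fun k => 2 * Real.log (k : ℝ)) (a := a) (n := n) han ?_
  · simp only [Nat.cast_add, Nat.cast_one] at key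
    have hla : 0 ≤ Real.log (a : ℝ) := Real.log_nonneg (by exact_mod_cast ha)
    linarith
  · intro m hm _
    simp only [Nat.cast_add, Nat.cast_one]
    have hm1 : (1 : ℝ) ≤ (m : ℝ) := by exact_mod_cast le_trans ha hm
    have h1 := s9_log_lb hm1
    have h2 : ((m : ℝ))⁻¹ ≤ 2 / ((m : ℝ) + 1) := by
      rw [inv_eq_one_div, div_le_div_iff₀ (by linarith) (by linarith)]
      linarith
    have h3 : 2 / ((m : ℝ) + 1) ≤ 2 * (Real.log ((m : ℝ) + 1) - Real.log (m : ℝ)) := by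
      rw [div_eq_mul_one_div]
      have := mul_le_mul_of_nonneg_left h1 (by norm_num : (0:ℝ) ≤ 2)
      linarith
    linarith

/-- partial sums of `k^γ`, `γ > -1`. -/
lemma s9_psum_gamma (γ : ℝ) (hγ : -1 < γ) :
    ∃ K : ℝ, 0 < K ∧ ∀ a n : ℕ, 1 ≤ a → a ≤ n →
      ∑ k ∈ Icc a n, (k : ℝ) ^ γ ≤ K * (n : ℝ) ^ (γ + 1) := by
  rcases le_or_gt 0 γ with hγ0 | hγ0
  · refine ⟨1, one_pos, fun a n ha han => ?_⟩
    have hn1 : (1 : ℝ) ≤ (n : ℝ) := by exact_mod_cast le_trans ha han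
    have hterm : ∀ k ∈ Icc a n, (k : ℝ) ^ γ ≤ (n : ℝ) ^ γ := fun k hk =>
      Real.rpow_le_rpow k.cast_nonneg (by exact_mod_cast (mem_Icc.mp hk).2) hγ0
    calc ∑ k ∈ Icc a n, (k : ℝ) ^ γ ≤ ∑ _k ∈ Icc a n, (n : ℝ) ^ γ :=
          Finset.sum_le_sum hterm
      _ = ((Icc a n).card : ℝ) * (n : ℝ) ^ γ := by
          rw [Finset.sum_const, nsmul_eq_mul]
      _ ≤ (n : ℝ) * (n : ℝ) ^ γ := by
          have hcard : (((Icc a n).card : ℕ) : ℝ) ≤ (n : ℝ) := by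
            rw [Nat.card_Icc]
            exact_mod_cast (by omega : n + 1 - a ≤ n)
          nlinarith [Real.rpow_nonneg n.cast_nonneg γ]
      _ = (n : ℝ) ^ (γ + 1) := by
          rw [add_comm, Real.rpow_add (by linarith) 1 γ, Real.rpow_one]
      _ = 1 * (n : ℝ) ^ (γ + 1) := (one_mul _).symm
  · have hp0 : 0 < γ + 1 := by linarith
    have hp1 : γ + 1 < 1 := by linarith
    refine ⟨4 / (γ + 1), by positivity, fun a n ha han => ?_⟩
    have hn1 : (1 : ℝ) ≤ (n : ℝ) := by exact_mod_cast le_trans ha han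
    have key := s9_sum_le_tele (g := fun k => (k : ℝ) ^ γ)
      (f := fun k => (2 / (γ + 1)) * (k : ℝ) ^ (γ + 1)) (a := a) (n := n) (by omega) ?_
    · simp only [Nat.cast_add, Nat.cast_one] at key
      have hap : 0 ≤ (2 / (γ + 1)) * (a : ℝ) ^ (γ + 1) := by positivity
      have h2 : ((n : ℝ) + 1) ^ (γ + 1) ≤ 2 * (n : ℝ) ^ (γ + 1) := by
        calc ((n : ℝ) + 1) ^ (γ + 1) ≤ (2 * (n : ℝ)) ^ (γ + 1) :=
              Real.rpow_le_rpow (by linarith) (by linarith) hp0.le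
          _ = 2 ^ (γ + 1) * (n : ℝ) ^ (γ + 1) := Real.mul_rpow (by norm_num) n.cast_nonneg
          _ ≤ 2 * (n : ℝ) ^ (γ + 1) := by
              have h21 : (2:ℝ) ^ (γ + 1) ≤ 2 ^ (1:ℝ) :=
                Real.rpow_le_rpow_of_exponent_le one_le_two hp1.le
              rw [Real.rpow_one] at h21
              have := Real.rpow_nonneg n.cast_nonneg (γ + 1)
              nlinarith
      have h3 : (2 / (γ + 1)) * ((n : ℝ) + 1) ^ (γ + 1)
          ≤ (2 / (γ + 1)) * (2 * (n : ℝ) ^ (γ + 1)) :=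
        mul_le_mul_of_nonneg_left h2 (by positivity)
      calc ∑ k ∈ Icc a n, (k : ℝ) ^ γ
          ≤ (2 / (γ + 1)) * ((n : ℝ) + 1) ^ (γ + 1) - (2 / (γ + 1)) * (a : ℝ) ^ (γ + 1) := key
        _ ≤ (2 / (γ + 1)) * (2 * (n : ℝ) ^ (γ + 1)) := by linarith
        _ = (4 / (γ + 1)) * (n : ℝ) ^ (γ + 1) := by ring
    · intro m hm _
      simp only [Nat.cast_add, Nat.cast_one]
      have hm1 : (1 : ℝ) ≤ (m : ℝ) := by exact_mod_cast le_trans ha hm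
      have hm0 : (0 : ℝ) < (m : ℝ) := by linarith
      have hber := s9_bern2 hp0 hp1.le hm0 (by linarith : (m:ℝ) ≤ (m:ℝ) + 1)
      have hsimp : ((m : ℝ) + 1) - (m : ℝ) = 1 := by ring
      rw [hsimp, mul_one] at hber
      have hpg : (γ + 1) - 1 = γ := by ring
      rw [hpg] at hber
      have h5 : (2 : ℝ) ^ γ * (m : ℝ) ^ γ ≤ ((m : ℝ) + 1) ^ γ := by
        rw [← Real.mul_rpow (by norm_num) m.cast_nonneg]
        exact Real.rpow_le_rpow_of_nonpos (by linarith) (by linarith) hγ0.le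
      have h6 : (1 / 2 : ℝ) ≤ (2 : ℝ) ^ γ := by
        have := Real.rpow_le_rpow_of_exponent_le (one_le_two) hγ.le
        rw [Real.rpow_neg_one] at this
        norm_num at this ⊢
        linarith
      have hmγ : (0 : ℝ) ≤ (m : ℝ) ^ γ := Real.rpow_nonneg m.cast_nonneg γ
      have h7 : (1 / 2 : ℝ) * (m : ℝ) ^ γ ≤ ((m : ℝ) + 1) ^ γ := by nlinarith
      have h8 : (γ + 1) * ((1 / 2 : ℝ) * (m : ℝ) ^ γ) ≤ ((m : ℝ) + 1) ^ (γ + 1) - (m : ℝ) ^ (γ + 1) := by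
        nlinarith [mul_le_mul_of_nonneg_left h7 hp0.le]
      have h9 := mul_le_mul_of_nonneg_left h8 (by positivity : (0:ℝ) ≤ 2 / (γ + 1))
      have h10 : (2 / (γ + 1)) * ((γ + 1) * ((1 / 2 : ℝ) * (m : ℝ) ^ γ)) = (m : ℝ) ^ γ := by
        field_simp
      rw [h10, mul_sub] at h9
      exact h9

/-- per-term bound when `δ = 1`. -/
lemma s9_d1_term (x : ℂ) (hx : 0 < x.re) (e : ℝ) (he : 0 < e) :
    ∃ C5 : ℝ, 0 < C5 ∧ ∀ n k : ℕ, 1 ≤ k → k ≤ n →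
      ‖Fprod x 1 k n‖ ^ e ≤
        C5 * (((n : ℝ) ^ (e * x.re))⁻¹ * (k : ℝ) ^ (e * x.re)) := by
  obtain ⟨C3, hC3, hkey⟩ := s9_key x 1 (by norm_num) e he
  set c : ℝ := e * x.re with hc
  have hc0 : 0 < c := mul_pos he hx
  refine ⟨C3 * 2 ^ c, by positivity, fun n k hk hkn => ?_⟩
  have hk0 : (0:ℝ) < (k : ℝ) := by exact_mod_cast hk
  have hk1 : (1:ℝ) ≤ (k : ℝ) := by exact_mod_cast hk
  have hn0 : (0:ℝ) < (n : ℝ) := lt_of_lt_of_le hk0 (by exact_mod_cast hkn)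
  have hS1 := s9_S1_eq1 k n hk hkn
  have h1 : ‖Fprod x 1 k n‖ ^ e ≤
      C3 * Real.exp (-c * ∑ m ∈ Icc (k + 1) n, ((m : ℝ) ^ (1:ℝ))⁻¹) := hkey k n
  have h2 : Real.exp (-c * ∑ m ∈ Icc (k + 1) n, ((m : ℝ) ^ (1:ℝ))⁻¹)
      ≤ Real.exp (-c * (Real.log ((n : ℝ) + 1) - Real.log ((k : ℝ) + 1))) := by
    apply Real.exp_le_exp.mpr
    nlinarith [hS1]
  have h3 : Real.exp (-c * (Real.log ((n : ℝ) + 1) - Real.log ((k : ℝ) + 1)))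
      = ((k : ℝ) + 1) ^ c * (((n : ℝ) + 1) ^ c)⁻¹ := by
    rw [Real.rpow_def_of_pos (by linarith : (0:ℝ) < (k:ℝ) + 1),
      Real.rpow_def_of_pos (by linarith : (0:ℝ) < (n:ℝ) + 1),
      ← Real.exp_neg, ← Real.exp_add]
    congr 1
    ring
  have h4 : ((k : ℝ) + 1) ^ c ≤ 2 ^ c * (k : ℝ) ^ c := by
    rw [← Real.mul_rpow (by norm_num) hk0.le]
    exact Real.rpow_le_rpow (by linarith) (by linarith) hc0.le
  have h5 : (((n : ℝ) + 1) ^ c)⁻¹ ≤ ((n : ℝ) ^ c)⁻¹ := by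
    apply inv_anti₀ (Real.rpow_pos_of_pos hn0 c)
    exact Real.rpow_le_rpow hn0.le (by linarith) hc0.le
  have hkpos : (0:ℝ) ≤ ((k : ℝ) + 1) ^ c := Real.rpow_nonneg (by linarith) c
  have hinv1 : (0:ℝ) ≤ (((n : ℝ) + 1) ^ c)⁻¹ := by positivity
  have h6 : ((k : ℝ) + 1) ^ c * (((n : ℝ) + 1) ^ c)⁻¹
      ≤ (2 ^ c * (k : ℝ) ^ c) * ((n : ℝ) ^ c)⁻¹ := by
    apply mul_le_mul h4 h5 hinv1 (by positivity)
  calc ‖Fprod x 1 k n‖ ^ e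
      ≤ C3 * Real.exp (-c * ∑ m ∈ Icc (k + 1) n, ((m : ℝ) ^ (1:ℝ))⁻¹) := h1
    _ ≤ C3 * (((k : ℝ) + 1) ^ c * (((n : ℝ) + 1) ^ c)⁻¹) := by
        rw [← h3]; exact mul_le_mul_of_nonneg_left h2 hC3.le
    _ ≤ C3 * ((2 ^ c * (k : ℝ) ^ c) * ((n : ℝ) ^ c)⁻¹) :=
        mul_le_mul_of_nonneg_left h6 hC3.le
    _ = C3 * 2 ^ c * (((n : ℝ) ^ c)⁻¹ * (k : ℝ) ^ c) := by ring

/-- per-term bound when `δ < 1`. -/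
lemma s9_dlt1_term (x : ℂ) (hx : 0 < x.re) (δ : ℝ) (hδ₁ : 1 / 2 < δ) (hδ₂ : δ < 1)
    (e : ℝ) (he : 0 < e) :
    ∃ D : ℝ, 0 < D ∧ ∀ n k : ℕ, 1 ≤ k → k ≤ n →
      ‖Fprod x δ k n‖ ^ e ≤
        D * Real.exp (-(e * x.re * (n : ℝ) ^ (-δ)) * ((n : ℝ) - (k : ℝ))) := by
  obtain ⟨C3, hC3, hkey⟩ := s9_key x δ hδ₁ e he
  set c : ℝ := e * x.re with hc
  have hc0 : 0 < c := mul_pos he hx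
  have hb : 0 < 1 - δ := by linarith
  refine ⟨C3 * Real.exp c, by positivity, fun n k hk hkn => ?_⟩
  have hk0 : (0:ℝ) < (k : ℝ) := by exact_mod_cast hk
  have hk1 : (1:ℝ) ≤ (k : ℝ) := by exact_mod_cast hk
  have hknR : (k:ℝ) ≤ (n:ℝ) := by exact_mod_cast hkn
  have hn0 : (0:ℝ) < (n : ℝ) := lt_of_lt_of_le hk0 hknR
  have hn1 : (1:ℝ) ≤ (n : ℝ) := le_trans hk1 hknR
  have hS1 := s9_S1_lt1 (by linarith : 0 < δ) hδ₂ k n hk hkn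
  -- (k+1)^(1-δ) ≤ k^(1-δ) + (1-δ)
  have hberk := s9_bern1 hb.le (by linarith) hk1
  have hkb1 : (k : ℝ) ^ ((1 - δ) - 1) ≤ 1 :=
    Real.rpow_le_one_of_one_le_of_nonpos hk1 (by linarith)
  have h1 : ((k : ℝ) + 1) ^ (1 - δ) ≤ (k : ℝ) ^ (1 - δ) + (1 - δ) := by
    nlinarith [hberk, hkb1]
  -- n^(1-δ) - k^(1-δ) ≥ (1-δ) n^(-δ) (n - k)
  have hbern := s9_bern2 hb (by linarith) hk0 hknR
  have hrw : (n : ℝ) ^ ((1 - δ) - 1) = (n : ℝ) ^ (-δ) := by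
    congr 1; ring
  rw [hrw] at hbern
  -- combine: c * ((n^(1-δ) - (k+1)^(1-δ))/(1-δ)) ≥ c * n^(-δ) * (n-k) - c
  have hstep : c * (n : ℝ) ^ (-δ) * ((n : ℝ) - (k : ℝ)) - c
      ≤ c * (((n : ℝ) ^ (1 - δ) - ((k : ℝ) + 1) ^ (1 - δ)) / (1 - δ)) := by
    rw [mul_div_assoc']
    rw [le_div_iff₀ hb]
    have hcb : 0 ≤ c / (1 - δ) := by positivity
    nlinarith [hbern, h1]
  have h2 : -c * (∑ m ∈ Icc (k + 1) n, ((m : ℝ) ^ δ)⁻¹)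
      ≤ -(c * (n : ℝ) ^ (-δ)) * ((n : ℝ) - (k : ℝ)) + c := by
    have := mul_le_mul_of_nonneg_left hS1 hc0.le
    nlinarith [hstep, this]
  calc ‖Fprod x δ k n‖ ^ e
      ≤ C3 * Real.exp (-c * ∑ m ∈ Icc (k + 1) n, ((m : ℝ) ^ δ)⁻¹) := hkey k n
    _ ≤ C3 * Real.exp (-(c * (n : ℝ) ^ (-δ)) * ((n : ℝ) - (k : ℝ)) + c) :=
        mul_le_mul_of_nonneg_left (Real.exp_le_exp.mpr h2) hC3.le
    _ = C3 * Real.exp c * Real.exp (-(c * (n : ℝ) ^ (-δ)) * ((n : ℝ) - (k : ℝ))) := by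
        rw [Real.exp_add]; ring

/-- sum bound for `δ = 1`. -/
lemma s9_d1_sum (x : ℂ) (hx : 0 < x.re) (e : ℝ) (he : 0 < e)
    (β : ℝ) (m₀ : ℕ) (hm₀ : 2 ≤ m₀) :
    ∃ C5 : ℝ, 0 < C5 ∧ ∀ n : ℕ, m₀ ≤ n →
      ∑ k ∈ Icc m₀ n, ((k : ℝ) ^ β)⁻¹ * ‖Fprod x 1 k n‖ ^ e
        ≤ C5 * (((n : ℝ) ^ (e * x.re))⁻¹ * ∑ k ∈ Icc m₀ n, (k : ℝ) ^ (e * x.re - β)) := by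
  obtain ⟨C5, hC5, hterm⟩ := s9_d1_term x hx e he
  set c : ℝ := e * x.re with hc
  refine ⟨C5, hC5, fun n hn => ?_⟩
  have hn0 : (0:ℝ) < (n : ℝ) := by
    have : 0 < n := by omega
    exact_mod_cast this
  calc ∑ k ∈ Icc m₀ n, ((k : ℝ) ^ β)⁻¹ * ‖Fprod x 1 k n‖ ^ e
      ≤ ∑ k ∈ Icc m₀ n, C5 * (((n : ℝ) ^ c)⁻¹ * (k : ℝ) ^ (c - β)) := by
        apply Finset.sum_le_sum
        intro k hk
        obtain ⟨hk1, hk2⟩ := mem_Icc.mp hk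
        have hk0 : (0:ℝ) < (k : ℝ) := by
          have : 0 < k := by omega
          exact_mod_cast this
        have h := hterm n k (by omega) hk2
        have h2 := mul_le_mul_of_nonneg_left h (by positivity : (0:ℝ) ≤ ((k : ℝ) ^ β)⁻¹)
        refine h2.trans (le_of_eq ?_)
        rw [Real.rpow_sub hk0, div_eq_mul_inv]
        ring
    _ = C5 * (((n : ℝ) ^ c)⁻¹ * ∑ k ∈ Icc m₀ n, (k : ℝ) ^ (c - β)) := by
        simp only [Finset.mul_sum]

lemma s9_sum_nonneg (x : ℂ) (δ β e : ℝ) (m₀ n : ℕ) :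
    0 ≤ ∑ k ∈ Icc m₀ n, ((k : ℝ) ^ β)⁻¹ * ‖Fprod x δ k n‖ ^ e :=
  Finset.sum_nonneg fun k _ =>
    mul_nonneg (by positivity) (Real.rpow_nonneg (norm_nonneg _) e)

theorem stmt9 (δ : ℝ) (hδ₁ : 1 / 2 < δ) (hδ₂ : δ ≤ 1) (x : ℂ) (hx : 0 < x.re)
    (β e : ℝ) (hβ : 1 < β) (he : 0 < e)
    (m₀ : ℕ) (hm₀ : 2 ≤ m₀)
    (hsmall : ∀ m : ℕ, m₀ ≤ m → x.re * ((m : ℝ) ^ δ)⁻¹ < 1) :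
    (δ < 1 →
      (fun n : ℕ => ∑ k ∈ Icc m₀ n, ((k : ℝ) ^ β)⁻¹ * ‖Fprod x δ k n‖ ^ e)
        =O[atTop] fun n : ℕ => (n : ℝ) ^ (-(β - δ))) ∧
    (δ = 1 → e * x.re < β - 1 →
      (fun n : ℕ => ∑ k ∈ Icc m₀ n, ((k : ℝ) ^ β)⁻¹ * ‖Fprod x δ k n‖ ^ e)
        =O[atTop] fun n : ℕ => (n : ℝ) ^ (-(e * x.re))) ∧
    (δ = 1 → e * x.re = β - 1 →
      (fun n : ℕ => ∑ k ∈ Icc m₀ n, ((k : ℝ) ^ β)⁻¹ * ‖Fprod x δ k n‖ ^ e)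
        =O[atTop] fun n : ℕ => (n : ℝ) ^ (-(β - 1)) * Real.log n) ∧
    (δ = 1 → β - 1 < e * x.re →
      (fun n : ℕ => ∑ k ∈ Icc m₀ n, ((k : ℝ) ^ β)⁻¹ * ‖Fprod x δ k n‖ ^ e)
        =O[atTop] fun n : ℕ => (n : ℝ) ^ (-(β - 1))) := by
  refine ⟨?_, ?_, ?_, ?_⟩
  -- Case δ < 1
  · intro hδlt
    obtain ⟨D, hD, hterm⟩ := s9_dlt1_term x hx δ hδ₁ hδlt e he
    obtain ⟨Cβ, hCβ, hpsβ⟩ := s9_psum_beta β hβ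
    have hc0 : 0 < e * x.re := mul_pos he hx
    set c : ℝ := e * x.re with hc
    have hb : 0 < 1 - δ := by linarith
    -- eventual smallness of the exponential part
    have hev : ∀ᶠ n : ℕ in atTop,
        D * Real.exp (-(c / 2) * (n : ℝ) ^ (1 - δ)) * Cβ ≤ (n : ℝ) ^ (δ - β) := by
      set s : ℝ := (β - δ) / (1 - δ) with hs
      have ht1 : Tendsto (fun y : ℝ => y ^ s * Real.exp (-(c / 2) * y)) atTop (nhds 0) :=
        tendsto_rpow_mul_exp_neg_mul_atTop_nhds_zero s (c / 2) (by positivity)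
      have ht2 : Tendsto (fun n : ℕ => (n : ℝ) ^ (1 - δ)) atTop atTop :=
        (tendsto_rpow_atTop hb).comp tendsto_natCast_atTop_atTop
      have ht3 := ht1.comp ht2
      have ht5 : ∀ᶠ n : ℕ in atTop,
          (D * Cβ) * (((n : ℝ) ^ (1 - δ)) ^ s * Real.exp (-(c / 2) * (n : ℝ) ^ (1 - δ))) ≤ 1 := by
        have h := ht3.const_mul (D * Cβ)
        rw [mul_zero] at h
        exact h.eventually (eventually_le_nhds one_pos)
      filter_upwards [ht5, eventually_ge_atTop 1] with n h1 hn1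
      have hn0 : (0:ℝ) < (n : ℝ) := by exact_mod_cast Nat.lt_of_lt_of_le Nat.zero_lt_one hn1
      have hpow : ((n : ℝ) ^ (1 - δ)) ^ s = (n : ℝ) ^ (β - δ) := by
        rw [← Real.rpow_mul n.cast_nonneg]
        congr 1
        rw [hs]
        field_simp
      rw [hpow] at h1
      have hbd : (0:ℝ) < (n : ℝ) ^ (β - δ) := Real.rpow_pos_of_pos hn0 _
      have h2 : D * Real.exp (-(c / 2) * (n : ℝ) ^ (1 - δ)) * Cβ * (n : ℝ) ^ (β - δ) ≤ 1 := by
        calc D * Real.exp (-(c / 2) * (n : ℝ) ^ (1 - δ)) * Cβ * (n : ℝ) ^ (β - δ)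
            = (D * Cβ) * ((n : ℝ) ^ (β - δ) * Real.exp (-(c / 2) * (n : ℝ) ^ (1 - δ))) := by ring
          _ ≤ 1 := h1
      have h3 : (n : ℝ) ^ (δ - β) = ((n : ℝ) ^ (β - δ))⁻¹ := by
        rw [show δ - β = -(β - δ) by ring, Real.rpow_neg n.cast_nonneg]
      rw [h3, ← one_div, le_div_iff₀ hbd]
      exact h2
    rw [isBigO_iff]
    refine ⟨1 + D * 2 ^ β * Real.exp c / c, ?_⟩
    filter_upwards [hev, eventually_ge_atTop m₀] with n hevn hn
    have hn2 : (2:ℝ) ≤ (n : ℝ) := by exact_mod_cast le_trans hm₀ hn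
    have hn0 : (0:ℝ) < (n : ℝ) := by linarith
    have hn1 : (1:ℝ) ≤ (n : ℝ) := by linarith
    set u : ℝ := c * (n : ℝ) ^ (-δ) with hu
    have hu0 : 0 < u := by
      rw [hu]; exact mul_pos hc0 (Real.rpow_pos_of_pos hn0 _)
    set T : ℕ → ℝ := fun k => ((k : ℝ) ^ β)⁻¹ * ‖Fprod x δ k n‖ ^ e with hT
    have hTnn : ∀ k, 0 ≤ T k := fun k =>
      mul_nonneg (by positivity) (Real.rpow_nonneg (norm_nonneg _) e)
    have hpow1 : (n : ℝ) ^ (-δ) * (n : ℝ) = (n : ℝ) ^ (1 - δ) := by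
      have h := Real.rpow_add hn0 (-δ) 1
      rw [Real.rpow_one] at h
      rw [show (1:ℝ) - δ = -δ + 1 by ring, h]
    -- part A : k with 2k < n
    have hSA : ∑ k ∈ (Icc m₀ n).filter (fun k => 2 * k < n), T k
        ≤ D * Real.exp (-(c / 2) * (n : ℝ) ^ (1 - δ)) * Cβ := by
      have hstep : ∀ k ∈ (Icc m₀ n).filter (fun k => 2 * k < n),
          T k ≤ D * Real.exp (-(c / 2) * (n : ℝ) ^ (1 - δ)) * ((k : ℝ) ^ β)⁻¹ := by
        intro k hk
        obtain ⟨hkI, hkP⟩ := Finset.mem_filter.mp hk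
        obtain ⟨hk1, hk2⟩ := mem_Icc.mp hkI
        have hterm' := hterm n k (by omega) hk2
        rw [← hu] at hterm'
        have hkr : 2 * (k:ℝ) + 1 ≤ (n:ℝ) := by
          have : 2 * k + 1 ≤ n := by omega
          exact_mod_cast this
        have hnk : (n:ℝ) / 2 ≤ (n:ℝ) - (k:ℝ) := by linarith
        have hud : u * ((n:ℝ) / 2) = (c / 2) * (n : ℝ) ^ (1 - δ) := by
          rw [hu, ← hpow1]; ring
        have hexp : Real.exp (-u * ((n:ℝ) - (k:ℝ))) ≤
            Real.exp (-(c / 2) * (n : ℝ) ^ (1 - δ)) := by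
          apply Real.exp_le_exp.mpr
          have := mul_le_mul_of_nonneg_left hnk hu0.le
          nlinarith [hud]
        calc T k ≤ ((k : ℝ) ^ β)⁻¹ * (D * Real.exp (-u * ((n:ℝ) - (k:ℝ)))) :=
              mul_le_mul_of_nonneg_left hterm' (by positivity)
          _ ≤ ((k : ℝ) ^ β)⁻¹ * (D * Real.exp (-(c / 2) * (n : ℝ) ^ (1 - δ))) := by
              apply mul_le_mul_of_nonneg_left _ (by positivity)
              exact mul_le_mul_of_nonneg_left hexp hD.le
          _ = D * Real.exp (-(c / 2) * (n : ℝ) ^ (1 - δ)) * ((k : ℝ) ^ β)⁻¹ := by ring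
      calc ∑ k ∈ (Icc m₀ n).filter (fun k => 2 * k < n), T k
          ≤ ∑ k ∈ (Icc m₀ n).filter (fun k => 2 * k < n),
              D * Real.exp (-(c / 2) * (n : ℝ) ^ (1 - δ)) * ((k : ℝ) ^ β)⁻¹ :=
            Finset.sum_le_sum hstep
        _ = D * Real.exp (-(c / 2) * (n : ℝ) ^ (1 - δ)) *
              ∑ k ∈ (Icc m₀ n).filter (fun k => 2 * k < n), ((k : ℝ) ^ β)⁻¹ := by
            rw [← Finset.mul_sum]
        _ ≤ D * Real.exp (-(c / 2) * (n : ℝ) ^ (1 - δ)) * Cβ :=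
            mul_le_mul_of_nonneg_left (hpsβ _) (by positivity)
    -- part B : k with n ≤ 2k
    have hSB : ∑ k ∈ (Icc m₀ n).filter (fun k => ¬ 2 * k < n), T k
        ≤ D * 2 ^ β * Real.exp c / c * (n : ℝ) ^ (δ - β) := by
      have hstep : ∀ k ∈ (Icc m₀ n).filter (fun k => ¬ 2 * k < n),
          T k ≤ 2 ^ β * ((n : ℝ) ^ β)⁻¹ * D * Real.exp (-u * ((n:ℝ) - (k:ℝ))) := by
        intro k hk
        obtain ⟨hkI, hkP⟩ := Finset.mem_filter.mp hk
        obtain ⟨hk1, hk2⟩ := mem_Icc.mp hkI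
        have hterm' := hterm n k (by omega) hk2
        rw [← hu] at hterm'
        have hkn2 : (n:ℝ) ≤ 2 * (k:ℝ) := by
          have : n ≤ 2 * k := by omega
          exact_mod_cast this
        have hkb : ((k : ℝ) ^ β)⁻¹ ≤ 2 ^ β * ((n : ℝ) ^ β)⁻¹ := by
          have h1 : ((n:ℝ) / 2) ^ β ≤ (k:ℝ) ^ β :=
            Real.rpow_le_rpow (by positivity) (by linarith) (by linarith)
          have h3 : (0:ℝ) < ((n:ℝ) / 2) ^ β := Real.rpow_pos_of_pos (by linarith) β
          have h4 := inv_anti₀ h3 h1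
          rw [Real.div_rpow n.cast_nonneg (by norm_num : (0:ℝ) ≤ 2), inv_div,
            div_eq_mul_inv] at h4
          exact h4
        calc T k ≤ ((k : ℝ) ^ β)⁻¹ * (D * Real.exp (-u * ((n:ℝ) - (k:ℝ)))) :=
              mul_le_mul_of_nonneg_left hterm' (by positivity)
          _ ≤ (2 ^ β * ((n : ℝ) ^ β)⁻¹) * (D * Real.exp (-u * ((n:ℝ) - (k:ℝ)))) :=
              mul_le_mul_of_nonneg_right hkb (by positivity)
          _ = 2 ^ β * ((n : ℝ) ^ β)⁻¹ * D * Real.exp (-u * ((n:ℝ) - (k:ℝ))) := by ring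
      have hgeo : ∑ k ∈ (Icc m₀ n).filter (fun k => ¬ 2 * k < n),
          Real.exp (-u * ((n:ℝ) - (k:ℝ))) ≤ Real.exp u / u := by
        refine le_trans (Finset.sum_le_sum_of_subset_of_nonneg
          (Finset.filter_subset _ _) (fun k _ _ => by positivity)) ?_
        exact s9_geom hu0 m₀ n
      have huc : u ≤ c := by
        rw [hu]
        have : (n : ℝ) ^ (-δ) ≤ 1 :=
          Real.rpow_le_one_of_one_le_of_nonpos hn1 (by linarith)
        nlinarith
      have huinv : u⁻¹ = c⁻¹ * (n : ℝ) ^ δ := by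
        rw [hu, mul_inv, Real.rpow_neg n.cast_nonneg, inv_inv]
      have hfin : Real.exp u / u ≤ Real.exp c * (c⁻¹ * (n : ℝ) ^ δ) := by
        rw [div_eq_mul_inv, huinv]
        exact mul_le_mul_of_nonneg_right (Real.exp_le_exp.mpr huc) (by positivity)
      calc ∑ k ∈ (Icc m₀ n).filter (fun k => ¬ 2 * k < n), T k
          ≤ ∑ k ∈ (Icc m₀ n).filter (fun k => ¬ 2 * k < n),
              2 ^ β * ((n : ℝ) ^ β)⁻¹ * D * Real.exp (-u * ((n:ℝ) - (k:ℝ))) :=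
            Finset.sum_le_sum hstep
        _ = 2 ^ β * ((n : ℝ) ^ β)⁻¹ * D *
              ∑ k ∈ (Icc m₀ n).filter (fun k => ¬ 2 * k < n),
                Real.exp (-u * ((n:ℝ) - (k:ℝ))) := by rw [← Finset.mul_sum]
        _ ≤ 2 ^ β * ((n : ℝ) ^ β)⁻¹ * D * (Real.exp u / u) :=
            mul_le_mul_of_nonneg_left hgeo (by positivity)
        _ ≤ 2 ^ β * ((n : ℝ) ^ β)⁻¹ * D * (Real.exp c * (c⁻¹ * (n : ℝ) ^ δ)) :=
            mul_le_mul_of_nonneg_left hfin (by positivity)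
        _ = D * 2 ^ β * Real.exp c / c * ((n : ℝ) ^ δ * ((n : ℝ) ^ β)⁻¹) := by
            rw [div_eq_mul_inv]
            ring
        _ = D * 2 ^ β * Real.exp c / c * (n : ℝ) ^ (δ - β) := by
            rw [Real.rpow_sub hn0]
            ring
    -- assemble
    have hnorm1 : ‖∑ k ∈ Icc m₀ n, ((k : ℝ) ^ β)⁻¹ * ‖Fprod x δ k n‖ ^ e‖
        = ∑ k ∈ Icc m₀ n, T k := by
      rw [Real.norm_eq_abs, abs_of_nonneg (s9_sum_nonneg x δ β e m₀ n)]
    have hnorm2 : ‖(n : ℝ) ^ (-(β - δ))‖ = (n : ℝ) ^ (δ - β) := by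
      rw [Real.norm_eq_abs, abs_of_nonneg (Real.rpow_nonneg n.cast_nonneg _),
        show -(β - δ) = δ - β by ring]
    rw [hnorm1, hnorm2]
    calc ∑ k ∈ Icc m₀ n, T k
        = (∑ k ∈ (Icc m₀ n).filter (fun k => 2 * k < n), T k)
          + ∑ k ∈ (Icc m₀ n).filter (fun k => ¬ 2 * k < n), T k :=
          (Finset.sum_filter_add_sum_filter_not _ _ _).symm
      _ ≤ (n : ℝ) ^ (δ - β) + D * 2 ^ β * Real.exp c / c * (n : ℝ) ^ (δ - β) :=
          add_le_add (hSA.trans hevn) hSB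
      _ = (1 + D * 2 ^ β * Real.exp c / c) * (n : ℝ) ^ (δ - β) := by ring
  -- Case δ = 1, e * x.re < β - 1
  · intro hδeq hce
    subst hδeq
    obtain ⟨C5, hC5, hsum⟩ := s9_d1_sum x hx e he β m₀ hm₀
    obtain ⟨Cs, hCs, hps⟩ := s9_psum_beta (β - e * x.re) (by linarith)
    rw [isBigO_iff]
    refine ⟨C5 * Cs, ?_⟩
    filter_upwards [eventually_ge_atTop m₀] with n hn
    have hn0 : (0:ℝ) < (n : ℝ) := by
      have : 0 < n := by omega
      exact_mod_cast this
    have h1 := hsum n hn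
    have h2 : ∑ k ∈ Icc m₀ n, (k : ℝ) ^ (e * x.re - β) ≤ Cs := by
      have heq : ∀ k ∈ Icc m₀ n, (k : ℝ) ^ (e * x.re - β) = ((k : ℝ) ^ (β - e * x.re))⁻¹ :=
        fun k _ => by
          rw [show e * x.re - β = -(β - e * x.re) by ring, Real.rpow_neg k.cast_nonneg]
      rw [Finset.sum_congr rfl heq]
      exact hps _
    have hnorm1 : ‖∑ k ∈ Icc m₀ n, ((k : ℝ) ^ β)⁻¹ * ‖Fprod x 1 k n‖ ^ e‖
        = ∑ k ∈ Icc m₀ n, ((k : ℝ) ^ β)⁻¹ * ‖Fprod x 1 k n‖ ^ e := by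
      rw [Real.norm_eq_abs, abs_of_nonneg (s9_sum_nonneg x 1 β e m₀ n)]
    have hnorm2 : ‖(n : ℝ) ^ (-(e * x.re))‖ = ((n : ℝ) ^ (e * x.re))⁻¹ := by
      rw [Real.norm_eq_abs, abs_of_nonneg (Real.rpow_nonneg n.cast_nonneg _),
        Real.rpow_neg n.cast_nonneg]
    rw [hnorm1, hnorm2]
    calc ∑ k ∈ Icc m₀ n, ((k : ℝ) ^ β)⁻¹ * ‖Fprod x 1 k n‖ ^ e
        ≤ C5 * (((n : ℝ) ^ (e * x.re))⁻¹ * ∑ k ∈ Icc m₀ n, (k : ℝ) ^ (e * x.re - β)) := h1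
      _ ≤ C5 * (((n : ℝ) ^ (e * x.re))⁻¹ * Cs) :=
          mul_le_mul_of_nonneg_left (mul_le_mul_of_nonneg_left h2 (by positivity)) hC5.le
      _ = C5 * Cs * ((n : ℝ) ^ (e * x.re))⁻¹ := by ring
  -- Case δ = 1, e * x.re = β - 1
  · intro hδeq hce
    subst hδeq
    obtain ⟨C5, hC5, hsum⟩ := s9_d1_sum x hx e he β m₀ hm₀
    rw [isBigO_iff]
    refine ⟨4 * C5, ?_⟩
    filter_upwards [eventually_ge_atTop m₀] with n hn
    have hn2 : (2:ℝ) ≤ (n : ℝ) := by exact_mod_cast le_trans hm₀ hn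
    have hn0 : (0:ℝ) < (n : ℝ) := by linarith
    have h1 := hsum n hn
    have h2 : ∑ k ∈ Icc m₀ n, (k : ℝ) ^ (e * x.re - β) ≤ 2 * Real.log ((n : ℝ) + 1) := by
      have heq : ∀ k ∈ Icc m₀ n, (k : ℝ) ^ (e * x.re - β) = ((k : ℝ))⁻¹ := fun k _ => by
        rw [show e * x.re - β = -1 by linarith, Real.rpow_neg_one]
      rw [Finset.sum_congr rfl heq]
      exact s9_psum_harm m₀ n (by omega) (by omega)
    have hlog : Real.log ((n : ℝ) + 1) ≤ 2 * Real.log (n : ℝ) := by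
      have h3 : (n : ℝ) + 1 ≤ (n : ℝ) * (n : ℝ) := by nlinarith
      have h4 := Real.log_le_log (by linarith) h3
      rwa [Real.log_mul (by linarith) (by linarith), ← two_mul] at h4
    have hlogn : 0 ≤ Real.log (n : ℝ) := Real.log_nonneg (by linarith)
    have hnorm1 : ‖∑ k ∈ Icc m₀ n, ((k : ℝ) ^ β)⁻¹ * ‖Fprod x 1 k n‖ ^ e‖
        = ∑ k ∈ Icc m₀ n, ((k : ℝ) ^ β)⁻¹ * ‖Fprod x 1 k n‖ ^ e := by
      rw [Real.norm_eq_abs, abs_of_nonneg (s9_sum_nonneg x 1 β e m₀ n)]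
    have hnorm2 : ‖(n : ℝ) ^ (-(β - 1)) * Real.log (n : ℝ)‖
        = ((n : ℝ) ^ (β - 1))⁻¹ * Real.log (n : ℝ) := by
      rw [Real.norm_eq_abs,
        abs_of_nonneg (mul_nonneg (Real.rpow_nonneg n.cast_nonneg _) hlogn),
        Real.rpow_neg n.cast_nonneg]
    rw [hnorm1, hnorm2]
    have hinv : (0:ℝ) ≤ ((n : ℝ) ^ (e * x.re))⁻¹ := by positivity
    calc ∑ k ∈ Icc m₀ n, ((k : ℝ) ^ β)⁻¹ * ‖Fprod x 1 k n‖ ^ e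
        ≤ C5 * (((n : ℝ) ^ (e * x.re))⁻¹ * ∑ k ∈ Icc m₀ n, (k : ℝ) ^ (e * x.re - β)) := h1
      _ ≤ C5 * (((n : ℝ) ^ (e * x.re))⁻¹ * (4 * Real.log (n : ℝ))) := by
          apply mul_le_mul_of_nonneg_left _ hC5.le
          apply mul_le_mul_of_nonneg_left _ hinv
          linarith
      _ = 4 * C5 * (((n : ℝ) ^ (e * x.re))⁻¹ * Real.log (n : ℝ)) := by ring
      _ = 4 * C5 * (((n : ℝ) ^ (β - 1))⁻¹ * Real.log (n : ℝ)) := by rw [hce]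
  -- Case δ = 1, β - 1 < e * x.re
  · intro hδeq hce
    subst hδeq
    obtain ⟨C5, hC5, hsum⟩ := s9_d1_sum x hx e he β m₀ hm₀
    obtain ⟨K, hK, hpg⟩ := s9_psum_gamma (e * x.re - β) (by linarith)
    rw [isBigO_iff]
    refine ⟨C5 * K, ?_⟩
    filter_upwards [eventually_ge_atTop m₀] with n hn
    have hn2 : (2:ℝ) ≤ (n : ℝ) := by exact_mod_cast le_trans hm₀ hn
    have hn0 : (0:ℝ) < (n : ℝ) := by linarith
    have h1 := hsum n hn
    have h2 := hpg m₀ n (by omega) hn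
    have hnorm1 : ‖∑ k ∈ Icc m₀ n, ((k : ℝ) ^ β)⁻¹ * ‖Fprod x 1 k n‖ ^ e‖
        = ∑ k ∈ Icc m₀ n, ((k : ℝ) ^ β)⁻¹ * ‖Fprod x 1 k n‖ ^ e := by
      rw [Real.norm_eq_abs, abs_of_nonneg (s9_sum_nonneg x 1 β e m₀ n)]
    have hnorm2 : ‖(n : ℝ) ^ (-(β - 1))‖ = (n : ℝ) ^ (-(β - 1)) := by
      rw [Real.norm_eq_abs, abs_of_nonneg (Real.rpow_nonneg n.cast_nonneg _)]
    rw [hnorm1, hnorm2]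
    have hfin : ((n : ℝ) ^ (e * x.re))⁻¹ * (K * (n : ℝ) ^ (e * x.re - β + 1))
        = K * (n : ℝ) ^ (-(β - 1)) := by
      rw [show -(β - 1) = (e * x.re - β + 1) - (e * x.re) by ring, Real.rpow_sub hn0,
        div_eq_mul_inv]
      ring
    calc ∑ k ∈ Icc m₀ n, ((k : ℝ) ^ β)⁻¹ * ‖Fprod x 1 k n‖ ^ e
        ≤ C5 * (((n : ℝ) ^ (e * x.re))⁻¹ * ∑ k ∈ Icc m₀ n, (k : ℝ) ^ (e * x.re - β)) := h1
      _ ≤ C5 * (((n : ℝ) ^ (e * x.re))⁻¹ * (K * (n : ℝ) ^ (e * x.re - β + 1))) := by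
          apply mul_le_mul_of_nonneg_left _ hC5.le
          exact mul_le_mul_of_nonneg_left h2 (by positivity)
      _ = C5 * (K * (n : ℝ) ^ (-(β - 1))) := by rw [hfin]
      _ = C5 * K * (n : ℝ) ^ (-(β - 1)) := by ring
end

section
/- Let $1/2 < \nu < 1$ and $q > 0$, define $F^{\nu}_{k+1,n-1}(q) := \prod_{m=k+1}^{n-1}(1 - q m^{-\nu})$ for $m_0 \le k \le n-1$ (with $m_0$ such that $q m^{-\nu} < 1$ for $m \ge m_0$). Then $\lim_{n\to\infty} n^{\nu} \sum_{k=m_0}^{n-1} q^2 k^{-2\nu} F^{\nu}_{k+1,n-1}(q)^2 = q/2$. -/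
open Finset Filter Asymptotics

noncomputable def cc (ν q : ℝ) : ℕ → ℝ := fun n => ((n : ℝ) + 1) ^ ν / (n : ℝ) ^ ν * (1 - q * ((n : ℝ) ^ ν)⁻¹) ^ 2
noncomputable def dd (ν q : ℝ) : ℕ → ℝ := fun n => q ^ 2 * ((n : ℝ) + 1) ^ ν * ((n : ℝ) ^ (2 * ν))⁻¹

lemma L1 (ν : ℝ) (hν0 : 0 < ν) : Tendsto (fun n : ℕ => (((n : ℝ)) ^ ν)⁻¹) atTop (nhds 0) := by
  have h := ((tendsto_rpow_atTop hν0).comp tendsto_natCast_atTop_atTop).inv_tendsto_atTop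
  exact h

lemma L2 (ν : ℝ) (hν0 : 0 < ν) :
    Tendsto (fun n : ℕ => ((n : ℝ) + 1) ^ ν / (n : ℝ) ^ ν) atTop (nhds 1) := by
  have h0 : Tendsto (fun n : ℕ => ((n : ℝ) + 1) / (n : ℝ)) atTop (nhds 1) := by
    have h1 : Tendsto (fun n : ℕ => 1 + 1 / (n : ℝ)) atTop (nhds 1) := by
      simpa using tendsto_const_nhds.add (tendsto_one_div_atTop_nhds_zero_nat (𝕜 := ℝ))
    refine h1.congr' ?_
    filter_upwards [eventually_ge_atTop 1] with n hn
    have : (n : ℝ) ≠ 0 := by positivity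
    field_simp
  have hcont : Tendsto (fun x : ℝ => x ^ ν) (nhds 1) (nhds 1) := by
    have := (Real.continuousAt_rpow_const 1 ν (Or.inl one_ne_zero)).tendsto
    simpa [Real.one_rpow] using this
  refine (hcont.comp h0).congr' ?_
  filter_upwards [eventually_ge_atTop 1] with n hn
  simp only [Function.comp]
  rw [Real.div_rpow (by positivity) (Nat.cast_nonneg n)]

lemma L3 (ν : ℝ) (hν0 : 0 < ν) (hν₂ : ν < 1) :
    Tendsto (fun n : ℕ => (n : ℝ) ^ ν * (((n : ℝ) + 1) ^ ν / (n : ℝ) ^ ν - 1)) atTop (nhds 0) := by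
  have hup : Tendsto (fun n : ℕ => ((n : ℝ)) ^ (ν - 1)) atTop (nhds 0) := by
    have h := (tendsto_rpow_neg_atTop (by linarith : (0:ℝ) < 1 - ν)).comp
      (tendsto_natCast_atTop_atTop (R := ℝ))
    have : ν - 1 = -(1 - ν) := by ring
    rw [this]
    exact h
  refine tendsto_of_tendsto_of_tendsto_of_le_of_le' tendsto_const_nhds hup ?_ ?_
  · filter_upwards [eventually_ge_atTop 1] with n hn
    have hnp : (0:ℝ) < (n : ℝ) := by exact_mod_cast hn
    have hP : (0:ℝ) < (n : ℝ) ^ ν := Real.rpow_pos_of_pos hnp ν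
    have hmono : (n : ℝ) ^ ν ≤ ((n : ℝ) + 1) ^ ν :=
      Real.rpow_le_rpow (le_of_lt hnp) (by linarith) (le_of_lt hν0)
    have hr : 1 ≤ ((n : ℝ) + 1) ^ ν / (n : ℝ) ^ ν := (one_le_div hP).mpr hmono
    nlinarith
  · filter_upwards [eventually_ge_atTop 1] with n hn
    have hnp : (0:ℝ) < (n : ℝ) := by exact_mod_cast hn
    have hP : (0:ℝ) < (n : ℝ) ^ ν := Real.rpow_pos_of_pos hnp ν
    have hb : (1:ℝ) ≤ ((n : ℝ) + 1) / (n : ℝ) := by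
      rw [le_div_iff₀ hnp]; linarith
    have h1 : (((n : ℝ) + 1) / (n : ℝ)) ^ ν ≤ (((n : ℝ) + 1) / (n : ℝ)) ^ (1:ℝ) :=
      Real.rpow_le_rpow_of_exponent_le hb (le_of_lt hν₂)
    rw [Real.rpow_one, Real.div_rpow (by positivity) (le_of_lt hnp)] at h1
    have h2 : ((n : ℝ) + 1) ^ ν / (n : ℝ) ^ ν - 1 ≤ ((n : ℝ) + 1) / (n : ℝ) - 1 := by linarith
    have h3 : (n : ℝ) ^ ν * (((n : ℝ) + 1) ^ ν / (n : ℝ) ^ ν - 1) ≤ (n : ℝ) ^ ν * (1 / (n : ℝ)) := by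
      have : ((n : ℝ) + 1) / (n : ℝ) - 1 = 1 / (n : ℝ) := by field_simp; ring
      rw [← this]
      exact mul_le_mul_of_nonneg_left h2 (le_of_lt hP)
    refine h3.trans (le_of_eq ?_)
    rw [Real.rpow_sub hnp, Real.rpow_one]
    ring

lemma limB (ν q : ℝ) (hν0 : 0 < ν) :
    Tendsto (fun n : ℕ => (n : ℝ) ^ ν * dd ν q n) atTop (nhds (q ^ 2)) := by
  have h := (L2 ν hν0).const_mul (q ^ 2)
  rw [mul_one] at h
  refine h.congr' ?_
  filter_upwards [eventually_ge_atTop 1] with n hn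
  have hnp : (0:ℝ) < (n : ℝ) := by exact_mod_cast hn
  have hP : (0:ℝ) < (n : ℝ) ^ ν := Real.rpow_pos_of_pos hnp ν
  have h2 : ((n : ℝ)) ^ (2 * ν) = (n : ℝ) ^ ν * (n : ℝ) ^ ν := by
    rw [two_mul, Real.rpow_add hnp]
  simp only [dd]
  rw [h2]
  field_simp

lemma limA (ν q : ℝ) (hν0 : 0 < ν) (hν₂ : ν < 1) :
    Tendsto (fun n : ℕ => (n : ℝ) ^ ν * (1 - cc ν q n)) atTop (nhds (2 * q)) := by
  have T1 : Tendsto (fun n : ℕ => 2 * q - q ^ 2 * ((n : ℝ) ^ ν)⁻¹) atTop (nhds (2 * q)) := by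
    simpa using tendsto_const_nhds.sub ((L1 ν hν0).const_mul (q ^ 2))
  have T2 : Tendsto (fun n : ℕ => (1 - q * ((n : ℝ) ^ ν)⁻¹) ^ 2) atTop (nhds 1) := by
    have h : Tendsto (fun n : ℕ => 1 - q * ((n : ℝ) ^ ν)⁻¹) atTop (nhds 1) := by
      simpa using tendsto_const_nhds.sub ((L1 ν hν0).const_mul q)
    simpa using h.pow 2
  have T3 := L3 ν hν0 hν₂
  have h := T1.sub (T2.mul T3)
  rw [mul_zero, sub_zero] at h
  refine h.congr' ?_
  filter_upwards [eventually_ge_atTop 1] with n hn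
  have hnp : (0:ℝ) < (n : ℝ) := by exact_mod_cast hn
  have hP : (0:ℝ) < (n : ℝ) ^ ν := Real.rpow_pos_of_pos hnp ν
  have hinv : (n : ℝ) ^ ν * ((n : ℝ) ^ ν)⁻¹ = 1 := mul_inv_cancel₀ hP.ne'
  simp only [cc]
  linear_combination (-(2 * q - q ^ 2 * ((n : ℝ) ^ ν)⁻¹)) * hinv


/-- Product of c over `Ico N n` tends to 0, given nonnegativity and divergence of `∑ (1 - c)`. -/
lemma prod_tendsto_zero (c : ℕ → ℝ) (N : ℕ)
    (hc0 : ∀ n, 0 ≤ c n)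
    (hsum : Tendsto (fun n => ∑ m ∈ Ico N n, (1 - c m)) atTop atTop) :
    Tendsto (fun n => ∏ m ∈ Ico N n, c m) atTop (nhds 0) := by
  have hup : Tendsto (fun n => Real.exp (-(∑ m ∈ Ico N n, (1 - c m)))) atTop (nhds 0) :=
    Real.tendsto_exp_atBot.comp (tendsto_neg_atTop_atBot.comp hsum)
  refine tendsto_of_tendsto_of_tendsto_of_le_of_le' tendsto_const_nhds hup ?_ ?_
  · exact Eventually.of_forall fun n => Finset.prod_nonneg fun m _ => hc0 m
  · refine Eventually.of_forall fun n => ?_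
    have : Real.exp (-(∑ m ∈ Ico N n, (1 - c m))) = ∏ m ∈ Ico N n, Real.exp (c m - 1) := by
      rw [← Real.exp_sum]; congr 1
      rw [← Finset.sum_neg_distrib]; exact Finset.sum_congr rfl fun m _ => by ring
    rw [this]
    exact Finset.prod_le_prod (fun m _ => hc0 m) fun m _ => by
      have := Real.add_one_le_exp (c m - 1); linarith

lemma key_recurrence_tendsto (a c d e : ℕ → ℝ) (L : ℝ)
    (hc0 : ∀ n, 0 ≤ c n)
    (hc1 : ∀ᶠ n in atTop, c n ≤ 1)
    (hrec : ∀ᶠ n in atTop, a (n + 1) = c n * a n + d n)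
    (he0 : ∀ᶠ n in atTop, 0 ≤ e n)
    (hele : ∀ᶠ n in atTop, e n ≤ 1 - c n)
    (hediv : ¬ Summable e)
    (hne : ∀ᶠ n in atTop, 1 - c n ≠ 0)
    (hlim : Tendsto (fun n => d n / (1 - c n)) atTop (nhds L)) :
    Tendsto a atTop (nhds L) := by
  rw [Metric.tendsto_atTop]
  intro ε hε
  have hεlim : Tendsto (fun n => d n / (1 - c n) - L) atTop (nhds 0) := by
    simpa using hlim.sub (tendsto_const_nhds (x := L))
  have hsmall : ∀ᶠ n in atTop, |d n / (1 - c n) - L| ≤ ε / 2 := by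
    have := hεlim.eventually (eventually_abs_sub_lt 0 (by positivity : (0:ℝ) < ε / 2))
    filter_upwards [this] with n hn
    simpa using hn.le
  -- choose a uniform threshold N
  obtain ⟨N, hN⟩ := (hc1.and (hrec.and (he0.and (hele.and (hne.and hsmall))))).exists_forall_of_atTop
  have hNc1 : ∀ n ≥ N, c n ≤ 1 := fun n hn => (hN n hn).1
  have hNrec : ∀ n ≥ N, a (n + 1) = c n * a n + d n := fun n hn => (hN n hn).2.1
  have hNe0 : ∀ n ≥ N, 0 ≤ e n := fun n hn => (hN n hn).2.2.1
  have hNele : ∀ n ≥ N, e n ≤ 1 - c n := fun n hn => (hN n hn).2.2.2.1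
  have hNne : ∀ n ≥ N, 1 - c n ≠ 0 := fun n hn => (hN n hn).2.2.2.2.1
  have hNsm : ∀ n ≥ N, |d n / (1 - c n) - L| ≤ ε / 2 := fun n hn => (hN n hn).2.2.2.2.2
  -- divergence of the partial sums of e from N
  have hsumE : Tendsto (fun n => ∑ m ∈ Ico N n, e m) atTop atTop := by
    have hns : ¬ Summable (fun m => e (N + m)) := by
      intro h
      exact hediv ((summable_nat_add_iff N).mp (by simpa [add_comm] using h))
    have hpos : ∀ m, 0 ≤ e (N + m) := fun m => hNe0 _ (Nat.le_add_right N m)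
    have h1 : Tendsto (fun n => ∑ i ∈ range n, e (N + i)) atTop atTop :=
      (not_summable_iff_tendsto_nat_atTop_of_nonneg hpos).mp hns
    have h2 : Tendsto (fun n => n - N) atTop atTop := tendsto_sub_atTop_nat N
    have := h1.comp h2
    refine this.congr fun n => ?_
    simp [Finset.sum_Ico_eq_sum_range]
  have hsumC : Tendsto (fun n => ∑ m ∈ Ico N n, (1 - c m)) atTop atTop := by
    refine tendsto_atTop_mono' _ ?_ hsumE
    filter_upwards [eventually_ge_atTop N] with n hn
    exact Finset.sum_le_sum fun m hm => hNele m (Finset.mem_Ico.mp hm).1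
  have hprod := prod_tendsto_zero c N hc0 hsumC
  -- the key induction
  set u : ℕ → ℝ := fun n => max (|a n - L| - ε / 2) 0 with hu
  have hstep : ∀ n ≥ N, u (n + 1) ≤ c n * u n := by
    intro n hn
    have hd : (1 - c n) * (d n / (1 - c n)) = d n := by
      rw [mul_comm, div_mul_cancel₀ _ (hNne n hn)]
    have hab : a (n + 1) - L = c n * (a n - L) + (1 - c n) * (d n / (1 - c n) - L) := by
      rw [hNrec n hn, mul_sub (1 - c n), hd]; ring
    have h1 : |a (n + 1) - L| ≤ c n * |a n - L| + (1 - c n) * (ε / 2) := by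
      rw [hab]
      refine (abs_add_le _ _).trans ?_
      rw [abs_mul, abs_mul, abs_of_nonneg (hc0 n), abs_of_nonneg (sub_nonneg.mpr (hNc1 n hn))]
      nlinarith [hNsm n hn, sub_nonneg.mpr (hNc1 n hn), abs_nonneg (a n - L)]
    have h2 : |a (n + 1) - L| - ε / 2 ≤ c n * (|a n - L| - ε / 2) := by nlinarith
    have h3 : |a n - L| - ε / 2 ≤ u n := le_max_left _ _
    have h4 : c n * (|a n - L| - ε / 2) ≤ c n * u n :=
      mul_le_mul_of_nonneg_left h3 (hc0 n)
    refine max_le (by linarith) (mul_nonneg (hc0 n) (le_max_right _ _))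
  have hind : ∀ n ≥ N, u n ≤ u N * ∏ m ∈ Ico N n, c m := by
    intro n hn
    induction n, hn using Nat.le_induction with
    | base => simp
    | succ n hn ih =>
      calc u (n + 1) ≤ c n * u n := hstep n hn
        _ ≤ c n * (u N * ∏ m ∈ Ico N n, c m) :=
            mul_le_mul_of_nonneg_left ih (hc0 n)
        _ = u N * ∏ m ∈ Ico N (n + 1), c m := by
            rw [Finset.prod_Ico_succ_top hn]; ring
  have hu0 : Tendsto u atTop (nhds 0) := by
    refine tendsto_of_tendsto_of_tendsto_of_le_of_le' tendsto_const_nhds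
      (by simpa using hprod.const_mul (u N)) ?_ ?_
    · exact Eventually.of_forall fun n => le_max_right _ _
    · filter_upwards [eventually_ge_atTop N] with n hn using hind n hn
  have hfin := hu0.eventually (eventually_lt_nhds (show (0:ℝ) < ε / 2 by positivity))
  obtain ⟨M, hM⟩ := hfin.exists_forall_of_atTop
  refine ⟨M, fun n hn => ?_⟩
  have h5 : u n < ε / 2 := hM n hn
  have h3 : |a n - L| - ε / 2 ≤ u n := le_max_left _ _
  rw [Real.dist_eq]
  linarith


lemma recur (ν q : ℝ) (m₀ : ℕ) (hm₀ : 2 ≤ m₀) (n : ℕ) (hn : m₀ ≤ n) :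
    (((n + 1 : ℕ) : ℝ)) ^ ν *
        ∑ k ∈ Icc m₀ (n + 1 - 1),
          q ^ 2 * ((k : ℝ) ^ (2 * ν))⁻¹ *
            (∏ m ∈ Icc (k + 1) (n + 1 - 1), (1 - q * ((m : ℝ) ^ ν)⁻¹)) ^ 2
      = cc ν q n * ((n : ℝ) ^ ν *
        ∑ k ∈ Icc m₀ (n - 1),
          q ^ 2 * ((k : ℝ) ^ (2 * ν))⁻¹ *
            (∏ m ∈ Icc (k + 1) (n - 1), (1 - q * ((m : ℝ) ^ ν)⁻¹)) ^ 2) + dd ν q n := by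
  have hn1 : 1 ≤ n := le_trans (by omega) hn
  have hnn : n - 1 + 1 = n := Nat.succ_pred_eq_of_pos hn1
  have hP : (0 : ℝ) < (n : ℝ) ^ ν := Real.rpow_pos_of_pos (by exact_mod_cast hn1) ν
  set g : ℕ → ℝ := fun m => 1 - q * ((m : ℝ) ^ ν)⁻¹ with hg
  have key : ∑ k ∈ Icc m₀ (n + 1 - 1),
      q ^ 2 * ((k : ℝ) ^ (2 * ν))⁻¹ * (∏ m ∈ Icc (k + 1) (n + 1 - 1), g m) ^ 2
      = (g n) ^ 2 * (∑ k ∈ Icc m₀ (n - 1),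
          q ^ 2 * ((k : ℝ) ^ (2 * ν))⁻¹ * (∏ m ∈ Icc (k + 1) (n - 1), g m) ^ 2)
        + q ^ 2 * ((n : ℝ) ^ (2 * ν))⁻¹ := by
    have h1 : ∀ F : ℕ → ℝ, ∑ k ∈ Icc m₀ n, F k = (∑ k ∈ Icc m₀ (n - 1), F k) + F n := by
      intro F
      conv_lhs => rw [← hnn]
      rw [Finset.sum_Icc_succ_top (by omega), hnn]
    simp only [Nat.add_sub_cancel]
    rw [h1]
    have h2 : ∀ k ∈ Icc m₀ (n - 1),
        q ^ 2 * ((k : ℝ) ^ (2 * ν))⁻¹ * (∏ m ∈ Icc (k + 1) n, g m) ^ 2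
        = (g n) ^ 2 * (q ^ 2 * ((k : ℝ) ^ (2 * ν))⁻¹ * (∏ m ∈ Icc (k + 1) (n - 1), g m) ^ 2) := by
      intro k hk
      have hkn : k ≤ n - 1 := (Finset.mem_Icc.mp hk).2
      have : ∏ m ∈ Icc (k + 1) n, g m = (∏ m ∈ Icc (k + 1) (n - 1), g m) * g n := by
        conv_lhs => rw [← hnn]
        rw [Finset.prod_Icc_succ_top (by omega), hnn]
      rw [this]; ring
    rw [Finset.sum_congr rfl h2, ← Finset.mul_sum]
    have hemp : Icc (n + 1) n = (∅ : Finset ℕ) := Finset.Icc_eq_empty (by omega)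
    rw [hemp]
    simp
  rw [key]
  have hcast : (((n + 1 : ℕ) : ℝ)) = (n : ℝ) + 1 := by push_cast; ring
  rw [hcast]
  simp only [cc, dd]
  set S := ∑ k ∈ Icc m₀ (n - 1),
      q ^ 2 * ((k : ℝ) ^ (2 * ν))⁻¹ * (∏ m ∈ Icc (k + 1) (n - 1), g m) ^ 2 with hS
  have hinv : (n : ℝ) ^ ν * ((n : ℝ) ^ ν)⁻¹ = 1 := mul_inv_cancel₀ hP.ne'
  simp only [hg]
  linear_combination (-(((n : ℝ) + 1) ^ ν * (1 - q * ((n : ℝ) ^ ν)⁻¹) ^ 2 * S)) * hinv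


theorem stmt18 (ν q : ℝ) (hν₁ : 1 / 2 < ν) (hν₂ : ν < 1) (hq : 0 < q)
    (m₀ : ℕ) (hm₀ : 2 ≤ m₀)
    (hsmall : ∀ m : ℕ, m₀ ≤ m → q * ((m : ℝ) ^ ν)⁻¹ < 1) :
    Tendsto (fun n : ℕ => (n : ℝ) ^ ν *
        ∑ k ∈ Icc m₀ (n - 1),
          q ^ 2 * ((k : ℝ) ^ (2 * ν))⁻¹ *
            (∏ m ∈ Icc (k + 1) (n - 1), (1 - q * ((m : ℝ) ^ ν)⁻¹)) ^ 2)
      atTop (nhds (q / 2)) := by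
  have hν0 : 0 < ν := by linarith
  have hA := limA ν q hν0 hν₂
  have hB := limB ν q hν0
  have hAq : ∀ᶠ n : ℕ in atTop, q ≤ (n : ℝ) ^ ν * (1 - cc ν q n) :=
    hA.eventually_const_le (by linarith)
  refine key_recurrence_tendsto _ (cc ν q) (dd ν q)
    (fun n => q * ((n : ℝ) ^ ν)⁻¹) (q / 2) ?_ ?_ ?_ ?_ ?_ ?_ ?_ ?_
  · -- hc0
    intro n
    exact mul_nonneg (div_nonneg (Real.rpow_nonneg (by positivity) _)
      (Real.rpow_nonneg (Nat.cast_nonneg n) _)) (sq_nonneg _)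
  · -- hc1
    filter_upwards [hAq, eventually_ge_atTop 1] with n hn h1
    have hnp : (0:ℝ) < (n : ℝ) := by exact_mod_cast h1
    have hP : (0:ℝ) < (n : ℝ) ^ ν := Real.rpow_pos_of_pos hnp ν
    nlinarith
  · -- hrec
    filter_upwards [eventually_ge_atTop m₀] with n hn
    exact recur ν q m₀ hm₀ n hn
  · -- he0
    filter_upwards with n
    positivity
  · -- hele
    filter_upwards [hAq, eventually_ge_atTop 1] with n hn h1
    have hnp : (0:ℝ) < (n : ℝ) := by exact_mod_cast h1
    have hP : (0:ℝ) < (n : ℝ) ^ ν := Real.rpow_pos_of_pos hnp ν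
    have key := mul_le_mul_of_nonneg_right hn (inv_pos.mpr hP).le
    have h2 : (n : ℝ) ^ ν * (1 - cc ν q n) * ((n : ℝ) ^ ν)⁻¹ = 1 - cc ν q n := by
      field_simp
    rw [h2] at key
    linarith
  · -- hediv
    intro h
    have h2 := h.mul_left q⁻¹
    have h3 : Summable (fun n : ℕ => ((n : ℝ) ^ ν)⁻¹) := by
      refine h2.congr fun n => ?_
      rw [← mul_assoc, inv_mul_cancel₀ hq.ne', one_mul]
    have := Real.summable_nat_rpow_inv.mp h3
    linarith
  · -- hne
    filter_upwards [hAq, eventually_ge_atTop 1] with n hn h1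
    have hnp : (0:ℝ) < (n : ℝ) := by exact_mod_cast h1
    have hP : (0:ℝ) < (n : ℝ) ^ ν := Real.rpow_pos_of_pos hnp ν
    intro h0
    rw [h0, mul_zero] at hn
    linarith
  · -- hlim
    have hdivlim : Tendsto (fun n : ℕ =>
        ((n : ℝ) ^ ν * dd ν q n) / ((n : ℝ) ^ ν * (1 - cc ν q n))) atTop (nhds (q / 2)) := by
      have := hB.div hA (by positivity)
      have hqq : q ^ 2 / (2 * q) = q / 2 := by
        field_simp
      rwa [hqq] at this
    refine hdivlim.congr' ?_
    filter_upwards [eventually_ge_atTop 1] with n h1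
    have hnp : (0:ℝ) < (n : ℝ) := by exact_mod_cast h1
    have hP : ((n : ℝ) ^ ν) ≠ 0 := (Real.rpow_pos_of_pos hnp ν).ne'
    rw [mul_div_mul_left _ _ hP]
end

section
/- Let $1/2 < \gamma < \nu = 1$, $c, q > 0$ with $q > 1/2$, and define $F^{1}_{k+1,n-1}(q) := \prod_{m=k+1}^{n-1}(1 - q/m)$ for $m_0 \le k \le n-1$. Then $\lim_{n\to\infty} n^{2\gamma - 1} \sum_{k=m_0}^{n-1} c^2 k^{-2\gamma} F^{1}_{k+1,n-1}(q)^2 = \frac{c^2}{2q - (2\gamma - 1)}$. -/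
open Finset Filter Asymptotics

open Nat

lemma sum_rpow_asymp (ρ : ℝ) (hρ : -1 < ρ) (M : ℕ) (hM : 1 ≤ M) :
    Tendsto (fun n : ℕ => (∑ k ∈ Ico M n, (k:ℝ)^ρ) / (n:ℝ)^(ρ+1)) atTop
      (nhds (1/(ρ+1))) := by
  have hρ1 : 0 < ρ + 1 := by linarith
  set S : ℕ → ℝ := fun n => ∑ k ∈ Ico M n, (k:ℝ)^ρ with hS
  set I : ℕ → ℝ := fun n => ((n:ℝ)^(ρ+1) - (M:ℝ)^(ρ+1))/(ρ+1) with hIdef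
  have hI : ∀ n : ℕ, ∫ x in (M:ℝ)..(n:ℝ), x ^ ρ = I n := fun n =>
    integral_rpow (Or.inl hρ)
  have hshift : ∀ n : ℕ, M ≤ n →
      ∑ k ∈ Ico M n, (((k+1:ℕ)):ℝ)^ρ = S n + (n:ℝ)^ρ - (M:ℝ)^ρ := by
    intro n hn
    have h1 : ∑ k ∈ Ico M n, (((k+1:ℕ)):ℝ)^ρ = ∑ k ∈ Ico (M+1) (n+1), (k:ℝ)^ρ :=
      Finset.sum_Ico_add' (fun k : ℕ => (k:ℝ)^ρ) M n 1
    have h2 : insert M (Ico (M+1) (n+1)) = Ico M (n+1) :=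
      Finset.insert_Ico_add_one_left_eq_Ico (Nat.lt_succ_of_le hn)
    have h3 : ∑ k ∈ Ico M (n+1), (k:ℝ)^ρ = (M:ℝ)^ρ + ∑ k ∈ Ico (M+1) (n+1), (k:ℝ)^ρ := by
      rw [← h2, Finset.sum_insert (by simp)]
    have h4 : ∑ k ∈ Ico M (n+1), (k:ℝ)^ρ = S n + (n:ℝ)^ρ :=
      Finset.sum_Ico_succ_top hn _
    rw [h1]; rw [h4] at h3; linarith
  have key : ∀ n : ℕ, M ≤ n →
      I n - ((n:ℝ)^ρ + (M:ℝ)^ρ) ≤ S n ∧ S n ≤ I n + ((n:ℝ)^ρ + (M:ℝ)^ρ) := by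
    intro n hn
    have hMpos : (0:ℝ) < M := by exact_mod_cast hM
    have hnn : (0:ℝ) ≤ (n:ℝ)^ρ := Real.rpow_nonneg (Nat.cast_nonneg n) ρ
    have hMn : (0:ℝ) ≤ (M:ℝ)^ρ := Real.rpow_nonneg (Nat.cast_nonneg M) ρ
    rcases le_or_gt 0 ρ with hρ0 | hρ0
    · have hmono : MonotoneOn (fun x : ℝ => x ^ ρ) (Set.Icc (M:ℝ) (n:ℝ)) := by
        intro x hx y hy hxy
        exact Real.rpow_le_rpow (le_trans hMpos.le hx.1) hxy hρ0
      have hup : S n ≤ I n := by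
        have := hmono.sum_le_integral_Ico hn
        rwa [hI n] at this
      have hlow : I n ≤ S n + (n:ℝ)^ρ - (M:ℝ)^ρ := by
        have := hmono.integral_le_sum_Ico hn
        rw [hI n] at this
        calc I n ≤ ∑ k ∈ Ico M n, (((k+1:ℕ)):ℝ)^ρ := this
          _ = S n + (n:ℝ)^ρ - (M:ℝ)^ρ := hshift n hn
      constructor <;> linarith
    · have hmono : AntitoneOn (fun x : ℝ => x ^ ρ) (Set.Icc (M:ℝ) (n:ℝ)) := by
        intro x hx y hy hxy
        exact Real.rpow_le_rpow_of_nonpos (lt_of_lt_of_le hMpos hx.1) hxy hρ0.le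
      have hlow : I n ≤ S n := by
        have := hmono.integral_le_sum_Ico hn
        rwa [hI n] at this
      have hup : S n + (n:ℝ)^ρ - (M:ℝ)^ρ ≤ I n := by
        have := hmono.sum_le_integral_Ico hn
        rw [hI n] at this
        calc S n + (n:ℝ)^ρ - (M:ℝ)^ρ = ∑ k ∈ Ico M n, (((k+1:ℕ)):ℝ)^ρ := (hshift n hn).symm
          _ ≤ I n := this
      constructor <;> linarith
  -- limits of the bounding sequences
  have hA : Tendsto (fun n : ℕ => ((n:ℝ)^(ρ+1))⁻¹) atTop (nhds 0) := by
    have : Tendsto (fun n : ℕ => (n:ℝ)^(ρ+1)) atTop atTop :=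
      (tendsto_rpow_atTop hρ1).comp tendsto_natCast_atTop_atTop
    exact this.inv_tendsto_atTop
  have hB : Tendsto (fun n : ℕ => ((n:ℝ))⁻¹) atTop (nhds 0) :=
    tendsto_inv_atTop_nhds_zero_nat
  have haux : ∀ ε : ℝ, Tendsto (fun n : ℕ => (I n + ε * ((n:ℝ)^ρ + (M:ℝ)^ρ))/(n:ℝ)^(ρ+1))
      atTop (nhds (1/(ρ+1))) := by
    intro ε
    have h1 : Tendsto (fun n : ℕ =>
        (1 - (M:ℝ)^(ρ+1) * ((n:ℝ)^(ρ+1))⁻¹)/(ρ+1)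
          + ε * ((n:ℝ)⁻¹ + (M:ℝ)^ρ * ((n:ℝ)^(ρ+1))⁻¹)) atTop (nhds (1/(ρ+1))) := by
      have t1 : Tendsto (fun n : ℕ => 1 - (M:ℝ)^(ρ+1) * ((n:ℝ)^(ρ+1))⁻¹) atTop
          (nhds (1 - (M:ℝ)^(ρ+1) * 0)) :=
        (tendsto_const_nhds (x := (1:ℝ))).sub (hA.const_mul ((M:ℝ)^(ρ+1)))
      have t2 : Tendsto (fun n : ℕ => (n:ℝ)⁻¹ + (M:ℝ)^ρ * ((n:ℝ)^(ρ+1))⁻¹) atTop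
          (nhds (0 + (M:ℝ)^ρ * 0)) := hB.add (hA.const_mul ((M:ℝ)^ρ))
      have := (t1.div_const (ρ+1)).add (t2.const_mul ε)
      simpa using this
    apply h1.congr'
    filter_upwards [eventually_ge_atTop 1] with n hn
    have hn0 : (0:ℝ) < n := by exact_mod_cast hn
    have hX : (0:ℝ) < (n:ℝ)^(ρ+1) := Real.rpow_pos_of_pos hn0 _
    have hrw : (n:ℝ)^ρ = (n:ℝ)^(ρ+1) * (n:ℝ)⁻¹ := by
      rw [Real.rpow_add_one hn0.ne']; field_simp
    rw [hIdef, hrw]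
    field_simp
  refine tendsto_of_tendsto_of_tendsto_of_le_of_le' (haux (-1)) (haux 1) ?_ ?_
  · filter_upwards [eventually_ge_atTop M] with n hn
    have hX : (0:ℝ) < (n:ℝ)^(ρ+1) :=
      Real.rpow_pos_of_pos (by exact_mod_cast lt_of_lt_of_le hM hn : (0:ℝ) < n) _
    have := (key n hn).1
    exact (div_le_div_iff_of_pos_right hX).mpr (by linarith)
  · filter_upwards [eventually_ge_atTop M] with n hn
    have hX : (0:ℝ) < (n:ℝ)^(ρ+1) :=
      Real.rpow_pos_of_pos (by exact_mod_cast lt_of_lt_of_le hM hn : (0:ℝ) < n) _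
    have := (key n hn).2
    exact (div_le_div_iff_of_pos_right hX).mpr (by linarith)

lemma sum_rpow_atTop (ρ : ℝ) (hρ : -1 < ρ) (M : ℕ) (hM : 1 ≤ M) :
    Tendsto (fun n : ℕ => ∑ k ∈ Ico M n, (k:ℝ)^ρ) atTop atTop := by
  have h := sum_rpow_asymp ρ hρ M hM
  have hpow : Tendsto (fun n : ℕ => (n:ℝ)^(ρ+1)) atTop atTop :=
    (tendsto_rpow_atTop (by linarith)).comp tendsto_natCast_atTop_atTop
  have h2 := Tendsto.pos_mul_atTop (by rw [one_div]; exact inv_pos.mpr (by linarith)) h hpow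
  apply h2.congr'
  filter_upwards [eventually_ge_atTop 1] with n hn
  have hX : ((n:ℝ)^(ρ+1)) ≠ 0 :=
    (Real.rpow_pos_of_pos (by exact_mod_cast hn : (0:ℝ) < n) _).ne'
  field_simp

lemma weighted_sum_asymp (ρ : ℝ) (hρ : -1 < ρ) (M : ℕ) (hM : 1 ≤ M)
    (b : ℕ → ℝ) (A : ℝ) (hb : Tendsto (fun k : ℕ => b k / (k:ℝ)^ρ) atTop (nhds A)) :
    Tendsto (fun n : ℕ => (∑ k ∈ Ico M n, b k) / (n:ℝ)^(ρ+1)) atTop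
      (nhds (A/(ρ+1))) := by
  set e : ℕ → ℝ := fun k => if k < M then 0 else b k - A * (k:ℝ)^ρ with he
  have hg0 : ∀ k : ℕ, 0 ≤ (k:ℝ)^ρ := fun k => Real.rpow_nonneg (Nat.cast_nonneg k) ρ
  have hgsum : Tendsto (fun n : ℕ => ∑ i ∈ range n, (i:ℝ)^ρ) atTop atTop := by
    apply tendsto_atTop_mono ?_ (sum_rpow_atTop ρ hρ 1 le_rfl)
    intro n
    rw [range_eq_Ico]
    exact Finset.sum_le_sum_of_subset_of_nonneg (Finset.Ico_subset_Ico (Nat.zero_le 1) le_rfl)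
      (fun i _ _ => hg0 i)
  have he_o : e =o[atTop] (fun k : ℕ => (k:ℝ)^ρ) := by
    rw [isLittleO_iff_tendsto']
    · have h1 : Tendsto (fun k : ℕ => b k / (k:ℝ)^ρ - A) atTop (nhds (A - A)) :=
        hb.sub tendsto_const_nhds
      rw [sub_self] at h1
      apply h1.congr'
      filter_upwards [eventually_ge_atTop (max M 1)] with k hk
      have hk1 : 1 ≤ k := le_trans (le_max_right M 1) hk
      have hkM : M ≤ k := le_trans (le_max_left M 1) hk
      have hkρ : ((k:ℝ)^ρ) ≠ 0 :=
        (Real.rpow_pos_of_pos (by exact_mod_cast hk1 : (0:ℝ) < k) _).ne'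
      rw [he]
      simp only [Nat.not_lt.mpr hkM, if_neg (Nat.not_lt.mpr hkM), if_false]
      field_simp
    · filter_upwards [eventually_ge_atTop 1] with k hk hzero
      exact absurd hzero (Real.rpow_pos_of_pos (by exact_mod_cast hk : (0:ℝ) < k) _).ne'
  have h0 : Tendsto (fun n : ℕ =>
      (∑ i ∈ range n, e i) / (∑ i ∈ range n, (i:ℝ)^ρ)) atTop (nhds 0) :=
    (he_o.sum_range hg0 hgsum).tendsto_div_nhds_zero
  have hRs : Tendsto (fun n : ℕ => (∑ i ∈ range n, (i:ℝ)^ρ) / (n:ℝ)^(ρ+1)) atTop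
      (nhds (1/(ρ+1))) := by
    have hA : Tendsto (fun n : ℕ => ((n:ℝ)^(ρ+1))⁻¹) atTop (nhds 0) :=
      ((tendsto_rpow_atTop (by linarith)).comp tendsto_natCast_atTop_atTop).inv_tendsto_atTop
    have := (hA.const_mul ((0:ℝ)^ρ)).add (sum_rpow_asymp ρ hρ 1 le_rfl)
    rw [mul_zero, zero_add] at this
    apply this.congr'
    filter_upwards [eventually_ge_atTop 1] with n hn
    rw [range_eq_Ico, Finset.sum_eq_sum_Ico_succ_bot (by omega : 0 < n)]
    push_cast
    ring
  have hmain := ((sum_rpow_asymp ρ hρ M hM).const_mul A).add (h0.mul hRs)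
  rw [zero_mul, add_zero] at hmain
  have hmain' : Tendsto (fun n : ℕ =>
      A * ((∑ k ∈ Ico M n, (k:ℝ)^ρ) / (n:ℝ)^(ρ+1))
        + ((∑ i ∈ range n, e i) / (∑ i ∈ range n, (i:ℝ)^ρ))
          * ((∑ i ∈ range n, (i:ℝ)^ρ) / (n:ℝ)^(ρ+1))) atTop (nhds (A/(ρ+1))) := by
    convert hmain using 2
    ring
  apply hmain'.congr'
  filter_upwards [eventually_ge_atTop M, hgsum.eventually_ge_atTop 1] with n hn hG
  have hsplit : ∑ i ∈ range n, e i = (∑ k ∈ Ico M n, b k) - A * ∑ k ∈ Ico M n, (k:ℝ)^ρ := by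
    rw [range_eq_Ico, ← Finset.sum_Ico_consecutive _ (Nat.zero_le M) hn]
    have h1 : ∑ i ∈ Ico 0 M, e i = 0 :=
      Finset.sum_eq_zero fun i hi => if_pos (Finset.mem_Ico.mp hi).2
    have h2 : ∑ i ∈ Ico M n, e i = ∑ i ∈ Ico M n, (b i - A * (i:ℝ)^ρ) :=
      Finset.sum_congr rfl fun i hi => if_neg (Nat.not_lt.mpr (Finset.mem_Ico.mp hi).1)
    rw [h1, h2, zero_add, Finset.sum_sub_distrib, Finset.mul_sum]
  have hGne : (∑ i ∈ range n, (i:ℝ)^ρ) ≠ 0 := by linarith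
  rw [hsplit]
  field_simp; ring

lemma prod_id_eq (m₀ k : ℕ) (hm₀ : 1 ≤ m₀) (hk : m₀ ≤ k) :
    (m₀ - 1)! * ∏ m ∈ Icc m₀ k, m = k ! := by
  have h1 : (∏ m ∈ Ico 1 m₀, m) * ∏ m ∈ Ico m₀ (k+1), m = ∏ m ∈ Ico 1 (k+1), m :=
    Finset.prod_Ico_consecutive _ hm₀ (by omega)
  have h2 : ∏ m ∈ Ico 1 (k+1), m = k ! := Finset.prod_Ico_id_eq_factorial k
  have h3 : ∏ m ∈ Ico 1 m₀, m = (m₀ - 1)! := by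
    have : m₀ = (m₀ - 1) + 1 := by omega
    rw [this, Finset.prod_Ico_id_eq_factorial]
    congr 1
  rw [← Finset.Ico_add_one_right_eq_Icc]
  rw [h3, h2] at h1
  exact h1

lemma prod_identity (q : ℝ) (m₀ : ℕ) (hm₀ : 2 ≤ m₀) (hq0 : 0 < q) (hqm : q < m₀)
    (k : ℕ) (hk : m₀ ≤ k) :
    Real.GammaSeq ((m₀:ℝ) - q) (k - m₀)
        * ((∏ m ∈ Icc m₀ k, (1 - q / (m:ℝ))) * (k:ℝ)^q)
      = ((m₀ - 1)! : ℝ) *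
        ((k:ℝ)^q * (((k - m₀ : ℕ)):ℝ)^((m₀:ℝ) - q) * (((k - m₀)! : ℕ) : ℝ) / ((k ! : ℕ) : ℝ)) := by
  set s : ℝ := (m₀:ℝ) - q with hs_def
  set N : ℕ := k - m₀ with hN
  have hQpos : (0:ℝ) < ∏ j ∈ range (N + 1), (s + (j:ℕ)) := by
    apply Finset.prod_pos
    intro j _
    have : (0:ℝ) ≤ (j:ℝ) := Nat.cast_nonneg j
    have hs : (0:ℝ) < s := by rw [hs_def]; linarith
    linarith
  have hnum : ∏ m ∈ Icc m₀ k, ((m:ℝ) - q) = ∏ j ∈ range (N + 1), (s + (j:ℕ)) := by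
    rw [← Finset.Ico_add_one_right_eq_Icc, Finset.prod_Ico_eq_prod_range]
    have hcard : k + 1 - m₀ = N + 1 := by omega
    rw [hcard]
    refine Finset.prod_congr rfl fun j _ => ?_
    push_cast
    ring
  have hfact : ((m₀ - 1)! : ℝ) * ∏ m ∈ Icc m₀ k, (m:ℝ) = (k ! : ℝ) := by
    have h := congrArg (Nat.cast : ℕ → ℝ) (prod_id_eq m₀ k (by omega) hk)
    push_cast at h
    exact h
  have hP : ∏ m ∈ Icc m₀ k, (1 - q / (m:ℝ))
      = (∏ j ∈ range (N + 1), (s + (j:ℕ))) * ((m₀ - 1)! : ℝ) / ((k ! : ℕ) : ℝ) := by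
    have h1 : ∏ m ∈ Icc m₀ k, (1 - q / (m:ℝ))
        = ∏ m ∈ Icc m₀ k, (((m:ℝ) - q) / (m:ℝ)) := by
      refine Finset.prod_congr rfl fun m hm => ?_
      have hm2 : m₀ ≤ m := (Finset.mem_Icc.mp hm).1
      have hm0 : (0:ℝ) < (m:ℝ) := by
        have : 0 < m := by omega
        exact_mod_cast this
      field_simp
    rw [h1, Finset.prod_div_distrib, hnum]
    have hk0 : ((k ! : ℕ) : ℝ) ≠ 0 := by exact_mod_cast k.factorial_ne_zero
    have hm0 : ((m₀ - 1)! : ℝ) ≠ 0 := by exact_mod_cast (m₀-1).factorial_ne_zero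
    have hprod_ne : ∏ m ∈ Icc m₀ k, (m:ℝ) ≠ 0 := by
      apply Finset.prod_ne_zero_iff.mpr
      intro m hm
      have : m₀ ≤ m := (Finset.mem_Icc.mp hm).1
      have : 0 < m := by omega
      exact_mod_cast this.ne'
    rw [div_eq_div_iff hprod_ne hk0, ← hfact]
    ring
  rw [hP, Real.GammaSeq]
  have hk0 : ((k ! : ℕ) : ℝ) ≠ 0 := by exact_mod_cast k.factorial_ne_zero
  field_simp

lemma ratio_tendsto_one (q : ℝ) (m₀ : ℕ) (hm₀ : 2 ≤ m₀) (hq0 : 0 < q) (hqm : q < m₀) :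
    Tendsto (fun k : ℕ => (k:ℝ)^q * (((k - m₀ : ℕ)):ℝ)^((m₀:ℝ) - q)
      * (((k - m₀)! : ℕ) : ℝ) / ((k ! : ℕ) : ℝ)) atTop (nhds 1) := by
  set s : ℝ := (m₀:ℝ) - q with hs_def
  have hinv : Tendsto (fun k : ℕ => (k:ℝ)⁻¹) atTop (nhds 0) :=
    tendsto_inv_atTop_nhds_zero_nat
  -- factor 1 : ((k - m₀)/k)^s → 1
  have b1 : Tendsto (fun k : ℕ => (((k - m₀ : ℕ)):ℝ)/(k:ℝ)) atTop (nhds 1) := by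
    have h := (tendsto_const_nhds (x := (1:ℝ))).sub (hinv.const_mul (m₀:ℝ))
    rw [mul_zero, sub_zero] at h
    apply h.congr'
    filter_upwards [eventually_ge_atTop (m₀ + 1)] with k hk
    have hk0 : ((k:ℝ)) ≠ 0 := by
      have : 0 < k := by omega
      exact_mod_cast this.ne'
    have hcast : (((k - m₀ : ℕ)):ℝ) = (k:ℝ) - (m₀:ℝ) := by
      have : m₀ ≤ k := by omega
      push_cast [this]
      ring
    rw [hcast]
    field_simp
  have F1 : Tendsto (fun k : ℕ => ((((k - m₀ : ℕ)):ℝ)/(k:ℝ))^s) atTop (nhds 1) := by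
    have := b1.rpow_const (Or.inl one_ne_zero) (p := s)
    rwa [Real.one_rpow] at this
  -- factor 2 upper bound : (k/(k - m₀ + 1))^m₀ → 1
  have w1 : Tendsto (fun k : ℕ => ((((k - m₀ : ℕ)):ℝ) + 1)/(k:ℝ)) atTop (nhds 1) := by
    have h := (tendsto_const_nhds (x := (1:ℝ))).sub (hinv.const_mul ((m₀:ℝ) - 1))
    rw [mul_zero, sub_zero] at h
    apply h.congr'
    filter_upwards [eventually_ge_atTop (m₀ + 1)] with k hk
    have hk0 : ((k:ℝ)) ≠ 0 := by
      have : 0 < k := by omega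
      exact_mod_cast this.ne'
    have hcast : (((k - m₀ : ℕ)):ℝ) = (k:ℝ) - (m₀:ℝ) := by
      have : m₀ ≤ k := by omega
      push_cast [this]
      ring
    rw [hcast]
    field_simp
    ring
  have v1 : Tendsto (fun k : ℕ => (k:ℝ)/((((k - m₀ : ℕ)):ℝ) + 1)) atTop (nhds 1) := by
    have h := w1.inv₀ one_ne_zero
    rw [inv_one] at h
    apply h.congr
    intro k
    rw [inv_div]
  have F2upper : Tendsto (fun k : ℕ => ((k:ℝ)/((((k - m₀ : ℕ)):ℝ) + 1))^(m₀:ℕ)) atTop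
      (nhds 1) := by
    have := v1.pow m₀
    rwa [one_pow] at this
  -- factor 2 : ∏ (k/m) → 1
  have F2 : Tendsto (fun k : ℕ => ∏ m ∈ Ico ((k - m₀) + 1) (k + 1), ((k:ℝ)/(m:ℝ)))
      atTop (nhds 1) := by
    apply tendsto_of_tendsto_of_tendsto_of_le_of_le' tendsto_const_nhds F2upper
    · filter_upwards [eventually_ge_atTop m₀] with k hk
      calc (1:ℝ) = ∏ m ∈ Ico ((k - m₀) + 1) (k + 1), (1:ℝ) := by rw [Finset.prod_const_one]
        _ ≤ ∏ m ∈ Ico ((k - m₀) + 1) (k + 1), ((k:ℝ)/(m:ℝ)) := by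
          apply Finset.prod_le_prod (fun _ _ => zero_le_one)
          intro m hm
          obtain ⟨hm1, hm2⟩ := Finset.mem_Ico.mp hm
          have hmpos : (0:ℝ) < m := by
            have : 0 < m := by omega
            exact_mod_cast this
          rw [le_div_iff₀ hmpos, one_mul]
          exact_mod_cast Nat.lt_succ_iff.mp hm2
    · filter_upwards [eventually_ge_atTop m₀] with k hk
      have hcard : (Ico ((k - m₀) + 1) (k + 1)).card = m₀ := by
        rw [Nat.card_Ico]; omega
      calc ∏ m ∈ Ico ((k - m₀) + 1) (k + 1), ((k:ℝ)/(m:ℝ))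
          ≤ ∏ m ∈ Ico ((k - m₀) + 1) (k + 1), ((k:ℝ)/((((k - m₀ : ℕ)):ℝ) + 1)) := by
            apply Finset.prod_le_prod
            · intro m hm
              have : 0 < m := by
                have := (Finset.mem_Ico.mp hm).1; omega
              positivity
            · intro m hm
              have h1 := (Finset.mem_Ico.mp hm).1
              have hden : (0:ℝ) < (((k - m₀ : ℕ)):ℝ) + 1 := by positivity
              apply div_le_div_of_nonneg_left (Nat.cast_nonneg k) hden
              exact_mod_cast h1
        _ = ((k:ℝ)/((((k - m₀ : ℕ)):ℝ) + 1))^(m₀:ℕ) := by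
            rw [Finset.prod_const, hcard]
  -- combine
  have := F1.mul F2
  rw [mul_one] at this
  apply this.congr'
  filter_upwards [eventually_ge_atTop (m₀ + 1)] with k hk
  set N : ℕ := k - m₀ with hN
  have hkpos : (0:ℝ) < (k:ℝ) := by
    have : 0 < k := by omega
    exact_mod_cast this
  have hNpos : (0:ℝ) < (N:ℝ) := by
    have : 0 < N := by omega
    exact_mod_cast this
  have hfr : ((k ! : ℕ) : ℝ) = ((N ! : ℕ) : ℝ) * ∏ m ∈ Ico (N + 1) (k + 1), (m:ℝ) := by
    have h1 : (∏ m ∈ Ico 1 (N+1), m) * ∏ m ∈ Ico (N+1) (k+1), m = ∏ m ∈ Ico 1 (k+1), m :=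
      Finset.prod_Ico_consecutive _ (by omega) (by omega)
    rw [Finset.prod_Ico_id_eq_factorial, Finset.prod_Ico_id_eq_factorial] at h1
    have := congrArg (Nat.cast : ℕ → ℝ) h1
    push_cast at this ⊢
    linarith
  have hprodpos : (0:ℝ) < ∏ m ∈ Ico (N + 1) (k + 1), (m:ℝ) := by
    apply Finset.prod_pos
    intro m hm
    have : 0 < m := by
      have := (Finset.mem_Ico.mp hm).1; omega
    exact_mod_cast this
  have hpow : (k:ℝ)^q * ((N:ℕ):ℝ)^s = ((N:ℝ)/(k:ℝ))^s * (k:ℝ)^(m₀:ℕ) := by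
    rw [Real.div_rpow hNpos.le hkpos.le, ← Real.rpow_natCast (k:ℝ) m₀]
    have hm : ((m₀:ℕ):ℝ) = s + q := by rw [hs_def]; ring
    rw [hm, Real.rpow_add hkpos]
    have hks : ((k:ℝ)^s) ≠ 0 := (Real.rpow_pos_of_pos hkpos s).ne'
    field_simp
  have hF2eq : ∏ m ∈ Ico (N + 1) (k + 1), ((k:ℝ)/(m:ℝ))
      = (k:ℝ)^(m₀:ℕ) / ∏ m ∈ Ico (N + 1) (k + 1), (m:ℝ) := by
    rw [Finset.prod_div_distrib, Finset.prod_const, Nat.card_Ico]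
    congr 2
    omega
  rw [hF2eq, hfr, hpow]
  have hNf : ((N ! : ℕ) : ℝ) ≠ 0 := by exact_mod_cast N.factorial_ne_zero
  field_simp

lemma prod_one_sub_asymp (q : ℝ) (m₀ : ℕ) (hm₀ : 2 ≤ m₀) (hq0 : 0 < q) (hqm : q < m₀) :
    ∃ C : ℝ, 0 < C ∧ Tendsto
      (fun k : ℕ => (∏ m ∈ Icc m₀ k, (1 - q / (m:ℝ))) * (k:ℝ)^q) atTop (nhds C) := by
  have hs : (0:ℝ) < (m₀:ℝ) - q := by linarith
  have hΓ : 0 < Real.Gamma ((m₀:ℝ) - q) := Real.Gamma_pos_of_pos hs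
  have hfacpos : (0:ℝ) < ((m₀ - 1)! : ℕ) := by exact_mod_cast (m₀ - 1).factorial_pos
  refine ⟨(((m₀ - 1)! : ℕ) : ℝ) / Real.Gamma ((m₀:ℝ) - q), by positivity, ?_⟩
  have hGS : Tendsto (fun k : ℕ => Real.GammaSeq ((m₀:ℝ) - q) (k - m₀)) atTop
      (nhds (Real.Gamma ((m₀:ℝ) - q))) :=
    (Real.GammaSeq_tendsto_Gamma _).comp (tendsto_sub_atTop_nat m₀)
  have hmul : Tendsto (fun k : ℕ => Real.GammaSeq ((m₀:ℝ) - q) (k - m₀)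
      * ((∏ m ∈ Icc m₀ k, (1 - q/(m:ℝ))) * (k:ℝ)^q)) atTop
      (nhds (((m₀ - 1)! : ℕ) : ℝ)) := by
    have h := (ratio_tendsto_one q m₀ hm₀ hq0 hqm).const_mul (((m₀ - 1)! : ℕ) : ℝ)
    rw [mul_one] at h
    apply h.congr'
    filter_upwards [eventually_ge_atTop m₀] with k hk
    exact (prod_identity q m₀ hm₀ hq0 hqm k hk).symm
  have hdiv := hmul.div hGS hΓ.ne'
  apply hdiv.congr'
  filter_upwards [hGS.eventually (eventually_gt_nhds (by linarith : (0:ℝ) < Real.Gamma ((m₀:ℝ) - q)))] with k hk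
  simp only [Pi.div_apply]
  rw [mul_comm, mul_div_assoc, div_self hk.ne', mul_one]
theorem stmt19 (γ c q : ℝ) (hγ₁ : 1 / 2 < γ) (hγ₂ : γ < 1) (hc : 0 < c) (hq : 1 / 2 < q)
    (m₀ : ℕ) (hm₀ : 2 ≤ m₀)
    (hsmall : ∀ m : ℕ, m₀ ≤ m → q / (m : ℝ) < 1) :
    Tendsto (fun n : ℕ => (n : ℝ) ^ (2 * γ - 1) *
        ∑ k ∈ Icc m₀ (n - 1),
          c ^ 2 * ((k : ℝ) ^ (2 * γ))⁻¹ *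
            (∏ m ∈ Icc (k + 1) (n - 1), (1 - q / (m : ℝ))) ^ 2)
      atTop (nhds (c ^ 2 / (2 * q - (2 * γ - 1)))) := by
  have hq0 : 0 < q := by linarith
  have hm₀pos : 0 < m₀ := by omega
  have hqm : q < (m₀:ℝ) := by
    have h := hsmall m₀ le_rfl
    have hp : (0:ℝ) < (m₀:ℝ) := by exact_mod_cast hm₀pos
    rw [div_lt_one hp] at h
    exact h
  set P : ℕ → ℝ := fun j => ∏ m ∈ Icc m₀ j, (1 - q/(m:ℝ)) with hPdef
  have hPpos : ∀ j, 0 < P j := by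
    intro j
    apply Finset.prod_pos
    intro m hm
    have h := hsmall m (Finset.mem_Icc.mp hm).1
    linarith
  obtain ⟨C, hC, hPq⟩ := prod_one_sub_asymp q m₀ hm₀ hq0 hqm
  set ρ : ℝ := 2*q - 2*γ with hρdef
  have hρ : -1 < ρ := by rw [hρdef]; linarith
  have hρ1 : 0 < ρ + 1 := by linarith
  set b : ℕ → ℝ := fun k => c^2 * ((k:ℝ)^(2*γ))⁻¹ * ((P k)^2)⁻¹ with hb_def
  have hb : Tendsto (fun k : ℕ => b k / (k:ℝ)^ρ) atTop (nhds (c^2/C^2)) := by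
    have h1 : Tendsto (fun k : ℕ => c^2 / (P k * (k:ℝ)^q)^2) atTop (nhds (c^2/C^2)) :=
      tendsto_const_nhds.div (hPq.pow 2) (pow_ne_zero 2 hC.ne')
    apply h1.congr'
    filter_upwards [eventually_ge_atTop 1] with k hk
    have hk0 : (0:ℝ) < k := by exact_mod_cast hk
    have h2 : ((k:ℝ)^(2*γ)) * (k:ℝ)^ρ = ((k:ℝ)^q)^2 := by
      rw [← Real.rpow_add hk0, ← Real.rpow_natCast ((k:ℝ)^q) 2, ← Real.rpow_mul hk0.le]
      congr 1
      rw [hρdef]; push_cast; ring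
    have hPk := hPpos k
    have e1 : ((k:ℝ)^(2*γ)) ≠ 0 := (Real.rpow_pos_of_pos hk0 _).ne'
    have e2 : ((k:ℝ)^ρ) ≠ 0 := (Real.rpow_pos_of_pos hk0 _).ne'
    rw [hb_def, mul_pow]
    field_simp
    rw [← h2]
  have hsum := weighted_sum_asymp ρ hρ m₀ (by omega) b (c^2/C^2) hb
  have hsub : Tendsto (fun n : ℕ => n - 1) atTop atTop := tendsto_sub_atTop_nat 1
  have hP1 : Tendsto (fun n : ℕ => P (n-1) * (((n-1:ℕ)):ℝ)^q) atTop (nhds C) :=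
    hPq.comp hsub
  have hbase : Tendsto (fun n : ℕ => (n:ℝ)/(((n-1:ℕ)):ℝ)) atTop (nhds 1) := by
    have w1 : Tendsto (fun n : ℕ => (((n-1:ℕ)):ℝ)/(n:ℝ)) atTop (nhds 1) := by
      have h := (tendsto_const_nhds (x := (1:ℝ))).sub tendsto_inv_atTop_nhds_zero_nat
      rw [sub_zero] at h
      apply h.congr'
      filter_upwards [eventually_ge_atTop 2] with n hn
      have hn0 : ((n:ℝ)) ≠ 0 := by
        have : 0 < n := by omega
        exact_mod_cast this.ne'
      have hcast : (((n-1:ℕ)):ℝ) = (n:ℝ) - 1 := by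
        have h1 : 1 ≤ n := by omega
        push_cast [h1]
        ring
      rw [hcast]
      field_simp
    have h := w1.inv₀ one_ne_zero
    rw [inv_one] at h
    apply h.congr
    intro n
    rw [inv_div]
  have hratio : Tendsto (fun n : ℕ => ((n:ℝ)/(((n-1:ℕ)):ℝ))^(2*q)) atTop (nhds 1) := by
    have := hbase.rpow_const (Or.inl one_ne_zero) (p := 2*q)
    rwa [Real.one_rpow] at this
  have hnfac : Tendsto (fun n : ℕ => (n:ℝ)^(2*q) * (P (n-1))^2) atTop (nhds (C^2)) := by
    have h := (hP1.pow 2).mul hratio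
    rw [mul_one] at h
    apply h.congr'
    filter_upwards [eventually_ge_atTop 2] with n hn
    have hn1pos : (0:ℝ) < ((n-1:ℕ):ℝ) := by
      have : 0 < n - 1 := by omega
      exact_mod_cast this
    have hnpos : (0:ℝ) < (n:ℝ) := by
      have : 0 < n := by omega
      exact_mod_cast this
    have hsq : ((((n-1:ℕ)):ℝ)^q)^2 = (((n-1:ℕ)):ℝ)^(2*q) := by
      rw [← Real.rpow_natCast ((((n-1:ℕ)):ℝ)^q) 2, ← Real.rpow_mul hn1pos.le]
      congr 1
      push_cast
      ring
    rw [mul_pow, hsq, Real.div_rpow hnpos.le hn1pos.le]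
    have hne : (((n-1:ℕ)):ℝ)^(2*q) ≠ 0 := (Real.rpow_pos_of_pos hn1pos _).ne'
    rw [mul_assoc, ← mul_div_assoc, mul_div_cancel_left₀ _ hne]
    ring
  have hfinal := hsum.mul hnfac
  have hlim : (c^2/C^2)/(ρ+1) * C^2 = c^2/(2*q - (2*γ-1)) := by
    have h1 : ρ + 1 = 2*q - (2*γ-1) := by rw [hρdef]; ring
    rw [h1]
    have h2 : (2*q - (2*γ-1)) ≠ 0 := by linarith
    field_simp
  rw [hlim] at hfinal
  apply hfinal.congr'
  filter_upwards [eventually_ge_atTop (m₀ + 2)] with n hn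
  have hnpos : (0:ℝ) < (n:ℝ) := by
    have : 0 < n := by omega
    exact_mod_cast this
  have hIcc : Icc m₀ (n-1) = Ico m₀ n := by
    rw [← Finset.Ico_add_one_right_eq_Icc]
    congr 1
    omega
  have hXne : ((n:ℝ)^(ρ+1)) ≠ 0 := (Real.rpow_pos_of_pos hnpos _).ne'
  have hprod : ∀ k ∈ Ico m₀ n,
      (∏ m ∈ Icc (k+1) (n-1), (1 - q/(m:ℝ)))^2 = (P (n-1))^2 / (P k)^2 := by
    intro k hk
    obtain ⟨hk1, hk2⟩ := Finset.mem_Ico.mp hk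
    have hsplit : P k * ∏ m ∈ Icc (k+1) (n-1), (1 - q/(m:ℝ)) = P (n-1) := by
      rw [hPdef]
      have h1 : Icc m₀ k = Ioc (m₀-1) k := by
        rw [← Finset.Icc_add_one_left_eq_Ioc]
        congr 1
        omega
      have h2 : Icc (k+1) (n-1) = Ioc k (n-1) := Finset.Icc_add_one_left_eq_Ioc k (n-1)
      have h3 : Icc m₀ (n-1) = Ioc (m₀-1) (n-1) := by
        rw [← Finset.Icc_add_one_left_eq_Ioc]
        congr 1
        omega
      simp only [h1, h2, h3]
      exact Finset.prod_Ioc_consecutive _ (by omega) (by omega)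
    have hPk := (hPpos k).ne'
    rw [eq_div_iff (pow_ne_zero 2 hPk), ← mul_pow]
    rw [mul_comm, hsplit]
  have hsum_eq : ∑ k ∈ Icc m₀ (n-1),
      c ^ 2 * ((k : ℝ) ^ (2 * γ))⁻¹ * (∏ m ∈ Icc (k + 1) (n - 1), (1 - q / (m : ℝ))) ^ 2
      = (P (n-1))^2 * ∑ k ∈ Ico m₀ n, b k := by
    rw [hIcc, Finset.mul_sum]
    refine Finset.sum_congr rfl fun k hk => ?_
    rw [hprod k hk, hb_def]
    have hPk := (hPpos k).ne'
    field_simp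
  rw [hsum_eq]
  have hn2q : (n:ℝ)^(2*q) = (n:ℝ)^(ρ+1) * (n:ℝ)^(2*γ-1) := by
    rw [← Real.rpow_add hnpos]
    congr 1
    rw [hρdef]
    ring
  rw [hn2q]
  field_simp
end
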